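/- arXiv:2412.05750 — 7 statements merged into one kernel-verified Lean document; each statement's English description precedes it below -/
import Mathlib

section
/- Suppose that for every integer v ≥ 2, all integers x, y with 1 < x < y ≤ ⌊v/2⌋ and gcd(v,x) = gcd(v,y) = 1, and all integers a, b, c ≥ 1 with a + b + c = v − 1 and a ≥ max(b, c), the multiset {1^a, x^b, y^c} is realizable. Then for every integer v ≥ 2, every multiset L of size v − 1 whose support consists of exactly three elements, all lying in {1, …, ⌊v/2⌋} and all coprime to v, is realizable. -/
/-- The multiset of absolute differences of consecutive entries of a list of naturals. -/
def linDiffs (l : List ℕ) : Multiset ℕ :=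
  ↑(List.zipWith (fun a b => (a - b) + (b - a)) l l.tail)

/-- `l` is a linear realization of the multiset `L`: it lists `0, …, |L|`
(each exactly once) and its consecutive absolute differences form `L`. -/
def IsLinearRealization (L : Multiset ℕ) (l : List ℕ) : Prop :=
  l.Perm (List.range (Multiset.card L + 1)) ∧ linDiffs l = L

def HasLinearRealization (L : Multiset ℕ) : Prop :=
  ∃ l : List ℕ, IsLinearRealization L l

/-- A standard linear realization starts at `0`. -/
def HasStandardLinearRealization (L : Multiset ℕ) : Prop :=
  ∃ l : List ℕ, IsLinearRealization L l ∧ l.head? = some 0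

/-- A perfect linear realization starts at `0` and ends at `v - 1 = |L|`. -/
def HasPerfectLinearRealization (L : Multiset ℕ) : Prop :=
  ∃ l : List ℕ, IsLinearRealization L l ∧ l.head? = some 0 ∧
    l.getLast? = some (Multiset.card L)

/-- The multiset of cyclic edge-lengths `min(|gᵢ₊₁ - gᵢ|, v - |gᵢ₊₁ - gᵢ|)`
of consecutive entries of a list of naturals. -/
def cycDiffs (v : ℕ) (l : List ℕ) : Multiset ℕ :=
  ↑(List.zipWith (fun a b => min ((a - b) + (b - a)) (v - ((a - b) + (b - a)))) l l.tail)

/-- `L` is (cyclically) realizable in `K_v`: some Hamiltonian path on the vertex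
set `{0, …, v-1}` has `L` as its multiset of edge-lengths. -/
def IsRealizable (v : ℕ) (L : Multiset ℕ) : Prop :=
  ∃ l : List ℕ, l.Perm (List.range v) ∧ cycDiffs v l = L

/-- The multiset `{1^a, x^b, y^c}`. -/
def mset3 (a b c x y : ℕ) : Multiset ℕ :=
  Multiset.replicate a 1 + Multiset.replicate b x + Multiset.replicate c y

/-- With `b = q'x + r'`, `0 ≤ r' < x`: `ω(x,b) = x - 1` if `q' = 0`, `r' = 1`,
or at least one of `x`, `r'` is even; otherwise `ω(x,b) = x`. -/
def omegaBHR (x b : ℕ) : ℕ :=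
  if b / x = 0 ∨ b % x = 1 ∨ Even x ∨ Even (b % x) then x - 1 else x

/-- The reduced form `ĝ = min(g, v - g)`. -/
def reducedForm (v g : ℕ) : ℕ := min g (v - g)

/-- The function `f` of Theorem 3.7 (counterexample characterization refined). -/
def fBHR (u w : ℕ) : ℕ :=
  if Even u ∧ Even w then w - 1
  else if u = 3 ∨ (Even u ∧ ¬ Even w) then u + w - 2
  else u + w - 1

/-- A multiset `L` of size `v - 1` with elements in `{1, …, ⌊v/2⌋}` is admissible
if for every divisor `d` of `v` the number of elements of `L` divisible by `d`
is at most `v - d`. -/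
def IsAdmissible (v : ℕ) (L : Multiset ℕ) : Prop :=
  Multiset.card L = v - 1 ∧ (∀ z ∈ L, 1 ≤ z ∧ z ≤ v / 2) ∧
  ∀ d : ℕ, d ∣ v → Multiset.card (L.filter (fun z => d ∣ z)) ≤ v - d

/-! ### Auxiliary material for `stmt2` -/

/-- The reduced form of an element of `ZMod v`. -/
def redZ (v : ℕ) (z : ZMod v) : ℕ := min (ZMod.val z) (v - ZMod.val z)

lemma redZ_neg (v : ℕ) [NeZero v] (z : ZMod v) : redZ v (-z) = redZ v z := by
  by_cases hz : z = 0
  · simp [hz]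
  · haveI : NeZero z := ⟨hz⟩
    have h1 : (-z).val = v - z.val := ZMod.val_neg_of_ne_zero z
    have h2 : z.val < v := ZMod.val_lt z
    have h3 : z.val ≠ 0 := fun h => hz ((ZMod.val_eq_zero z).mp h)
    unfold redZ
    rw [h1]
    omega

lemma redZ_natCast (v : ℕ) [NeZero v] (w : ℕ) :
    redZ v (w : ZMod v) = reducedForm v (w % v) := by
  unfold redZ reducedForm
  rw [ZMod.val_natCast]

lemma redZ_cast_or (v : ℕ) [NeZero v] (z : ZMod v) :
    ((redZ v z : ℕ) : ZMod v) = z ∨ ((redZ v z : ℕ) : ZMod v) = -z := by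
  unfold redZ
  rcases min_choice (ZMod.val z) (v - ZMod.val z) with h | h <;> rw [h]
  · left; exact ZMod.natCast_rightInverse z
  · right
    rw [Nat.cast_sub (ZMod.val_lt z).le, ZMod.natCast_self, zero_sub,
      ZMod.natCast_rightInverse z]

lemma cf_eq_redZ (v a b : ℕ) [NeZero v] (ha : a < v) (hb : b < v) :
    min ((a - b) + (b - a)) (v - ((a - b) + (b - a))) = redZ v ((a : ZMod v) - b) := by
  rcases le_total a b with h | h
  · have hab : (a - b) + (b - a) = b - a := by omega
    have hc : ((a : ZMod v) - b) = -(((b - a : ℕ) : ZMod v)) := by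
      rw [Nat.cast_sub h]; ring
    rw [hab, hc, redZ_neg, redZ_natCast, Nat.mod_eq_of_lt (by omega)]
    rfl
  · have hab : (a - b) + (b - a) = a - b := by omega
    have hc : ((a : ZMod v) - b) = (((a - b : ℕ) : ZMod v)) := by
      rw [Nat.cast_sub h]
    rw [hab, hc, redZ_natCast, Nat.mod_eq_of_lt (by omega)]
    rfl

lemma cf_mul (v t a b : ℕ) [NeZero v] (hv : 0 < v) (ha : a < v) (hb : b < v) :
    min ((t * a % v - t * b % v) + (t * b % v - t * a % v))
        (v - ((t * a % v - t * b % v) + (t * b % v - t * a % v)))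
      = reducedForm v (t * (min ((a - b) + (b - a)) (v - ((a - b) + (b - a)))) % v) := by
  rw [cf_eq_redZ v (t * a % v) (t * b % v) (Nat.mod_lt _ hv) (Nat.mod_lt _ hv),
    cf_eq_redZ v a b ha hb]
  rw [← redZ_natCast v (t * redZ v ((a : ZMod v) - b))]
  have hcast : ((t * redZ v ((a : ZMod v) - b) : ℕ) : ZMod v)
      = (t : ZMod v) * ((redZ v ((a : ZMod v) - b) : ℕ) : ZMod v) := by push_cast; ring
  have hmods : ((t * a % v : ℕ) : ZMod v) - ((t * b % v : ℕ) : ZMod v)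
      = (t : ZMod v) * ((a : ZMod v) - (b : ZMod v)) := by
    rw [ZMod.natCast_mod, ZMod.natCast_mod]; push_cast; ring
  rcases redZ_cast_or v ((a : ZMod v) - b) with h | h
  · rw [hcast, h, hmods]
  · rw [hcast, h, mul_neg, redZ_neg, hmods]

lemma comp_lemma (v t s d : ℕ) [NeZero v] (hv : 2 ≤ v) (hts : t * s % v = 1)
    (hd : d ≤ v / 2) :
    reducedForm v (s * reducedForm v (t * d % v) % v) = d := by
  have h1 : ((t * s : ℕ) : ZMod v) = 1 := by
    rw [← ZMod.natCast_mod, hts, Nat.cast_one]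
  have key : ∀ z : ZMod v, (s : ZMod v) * z = (d : ZMod v) →
      redZ v ((s : ZMod v) * z) = d := by
    intro z hz
    rw [hz, redZ_natCast, Nat.mod_eq_of_lt (by omega)]
    unfold reducedForm
    omega
  rw [← redZ_natCast v (t * d), ← redZ_natCast v (s * redZ v ((t * d : ℕ) : ZMod v))]
  have hcast : ((s * redZ v ((t * d : ℕ) : ZMod v) : ℕ) : ZMod v)
      = (s : ZMod v) * ((redZ v ((t * d : ℕ) : ZMod v) : ℕ) : ZMod v) := by push_cast; ring
  have hstd : (s : ZMod v) * ((t * d : ℕ) : ZMod v) = (d : ZMod v) := by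
    push_cast
    push_cast at h1
    calc (s : ZMod v) * ((t : ZMod v) * d) = (t : ZMod v) * s * d := by ring
    _ = (d : ZMod v) := by rw [h1, one_mul]
  rcases redZ_cast_or v ((t * d : ℕ) : ZMod v) with h | h
  · rw [hcast, h]
    exact key _ hstd
  · rw [hcast, h, mul_neg, redZ_neg]
    exact key _ hstd

lemma coprime_red (v t s d : ℕ) [NeZero v] (hts : t * s % v = 1)
    (hd : Nat.gcd v d = 1) : Nat.gcd v (reducedForm v (t * d % v)) = 1 := by
  have h1 : IsUnit ((t : ZMod v)) := by
    refine IsUnit.of_mul_eq_one (s : ZMod v) ?_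
    rw [← Nat.cast_mul, ← ZMod.natCast_mod, hts, Nat.cast_one]
  have h2 : IsUnit ((d : ZMod v)) :=
    (ZMod.isUnit_iff_coprime d v).mpr (Nat.coprime_comm.mp hd)
  have h3 : IsUnit (((reducedForm v (t * d % v) : ℕ)) : ZMod v) := by
    have he : reducedForm v (t * d % v) = redZ v ((t * d : ℕ) : ZMod v) :=
      (redZ_natCast v (t * d)).symm
    rw [he]
    rcases redZ_cast_or v ((t * d : ℕ) : ZMod v) with h | h <;> rw [h]
    · push_cast; exact h1.mul h2
    · push_cast; exact (h1.mul h2).neg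
  exact Nat.coprime_comm.mp ((ZMod.isUnit_iff_coprime _ v).mp h3)

lemma red_le_half (v w : ℕ) (hv : 0 < v) : reducedForm v (w % v) ≤ v / 2 := by
  have := Nat.mod_lt w hv
  unfold reducedForm
  omega

lemma zip_mul (v t : ℕ) [NeZero v] (hv : 0 < v) :
    ∀ l : List ℕ, (∀ a ∈ l, a < v) →
      List.zipWith (fun a b => min ((a - b) + (b - a)) (v - ((a - b) + (b - a))))
        (l.map fun a => t * a % v) (l.map fun a => t * a % v).tail
      = List.map (fun d => reducedForm v (t * d % v))
          (List.zipWith (fun a b => min ((a - b) + (b - a)) (v - ((a - b) + (b - a)))) l l.tail)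
  | [], _ => by simp
  | [a], _ => by simp
  | a :: b :: l', hl => by
    simp only [List.map_cons, List.tail_cons, List.zipWith_cons_cons]
    rw [cf_mul v t a b hv (hl a (by simp)) (hl b (by simp))]
    congr 1
    have := zip_mul v t hv (b :: l') (fun x hx => hl x (List.mem_cons_of_mem _ hx))
    simpa using this

lemma realizable_map (v t s : ℕ) (hv : 2 ≤ v) (hts : t * s % v = 1)
    (L : Multiset ℕ) (h : IsRealizable v L) :
    IsRealizable v (L.map fun d => reducedForm v (t * d % v)) := by
  haveI : NeZero v := ⟨by omega⟩
  obtain ⟨l, hperm, hdiff⟩ := h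
  have hvpos : 0 < v := by omega
  have hlt : ∀ a ∈ l, a < v := fun a ha => List.mem_range.mp (hperm.subset ha)
  refine ⟨l.map fun a => t * a % v, ?_, ?_⟩
  · refine (hperm.map _).trans ?_
    have hs1 : ((t * s : ℕ) : ZMod v) = 1 := by
      rw [← ZMod.natCast_mod, hts, Nat.cast_one]
    have hnd : ((List.range v).map fun a => t * a % v).Nodup := by
      refine List.Nodup.map_on ?_ (List.nodup_range (n := v))
      intro x hx y hy hxy
      have hx' : x < v := List.mem_range.mp hx
      have hy' : y < v := List.mem_range.mp hy
      have h1 : ((x : ZMod v)) = (y : ZMod v) := by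
        have e : ((t * x : ℕ) : ZMod v) = ((t * y : ℕ) : ZMod v) := by
          rw [← ZMod.natCast_mod (t * x) v, ← ZMod.natCast_mod (t * y) v, hxy]
        calc (x : ZMod v) = ((t * s : ℕ) : ZMod v) * x := by rw [hs1, one_mul]
        _ = (s : ZMod v) * ((t * x : ℕ) : ZMod v) := by push_cast; ring
        _ = (s : ZMod v) * ((t * y : ℕ) : ZMod v) := by rw [e]
        _ = ((t * s : ℕ) : ZMod v) * y := by push_cast; ring
        _ = y := by rw [hs1, one_mul]
      have h2 := congrArg ZMod.val h1
      rwa [ZMod.val_natCast_of_lt hx', ZMod.val_natCast_of_lt hy'] at h2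
    have hsub : ((List.range v).map fun a => t * a % v) ⊆ List.range v := by
      intro x hx
      obtain ⟨a, -, rfl⟩ := List.mem_map.mp hx
      exact List.mem_range.mpr (Nat.mod_lt _ hvpos)
    exact (List.subperm_of_subset hnd hsub).perm_of_length_le (by simp)
  · show cycDiffs v _ = _
    unfold cycDiffs at hdiff ⊢
    rw [zip_mul v t hvpos l hlt, ← hdiff]
    rfl

/-- Core of the argument, with the support element of maximal multiplicity
distinguished and the images ordered. -/
lemma key2
    (H : ∀ v x y a b c : ℕ, 2 ≤ v → 1 < x → x < y → y ≤ v / 2 →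
      Nat.gcd v x = 1 → Nat.gcd v y = 1 → 1 ≤ a → 1 ≤ b → 1 ≤ c →
      a + b + c = v - 1 → max b c ≤ a → IsRealizable v (mset3 a b c x y))
    (v : ℕ) (hv : 2 ≤ v) (L : Multiset ℕ) (hcard : Multiset.card L = v - 1)
    (s1 s2 s3 : ℕ) (h12 : s1 ≠ s2) (h13 : s1 ≠ s3) (h23 : s2 ≠ s3)
    (hset : L.toFinset = {s1, s2, s3})
    (hmem : ∀ z ∈ L, 1 ≤ z ∧ z ≤ v / 2 ∧ Nat.gcd v z = 1)
    (hmax2 : L.count s2 ≤ L.count s1) (hmax3 : L.count s3 ≤ L.count s1)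
    (t : ℕ) (hts : s1 * t % v = 1)
    (hlt : reducedForm v (t * s2 % v) < reducedForm v (t * s3 % v)) :
    IsRealizable v L := by
  haveI : NeZero v := ⟨by omega⟩
  have hvpos : 0 < v := by omega
  have hts' : t * s1 % v = 1 := by rwa [mul_comm] at hts
  have hmem1 : s1 ∈ L := by
    rw [← Multiset.mem_toFinset, hset]; simp
  have hmem2 : s2 ∈ L := by
    rw [← Multiset.mem_toFinset, hset]; simp
  have hmem3 : s3 ∈ L := by
    rw [← Multiset.mem_toFinset, hset]; simp
  obtain ⟨hs1a, hs1b, hs1c⟩ := hmem s1 hmem1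
  obtain ⟨hs2a, hs2b, hs2c⟩ := hmem s2 hmem2
  obtain ⟨hs3a, hs3b, hs3c⟩ := hmem s3 hmem3
  set a := L.count s1 with ha
  set b := L.count s2 with hb
  set c := L.count s3 with hc
  have ha1 : 1 ≤ a := Multiset.one_le_count_iff_mem.mpr hmem1
  have hb1 : 1 ≤ b := Multiset.one_le_count_iff_mem.mpr hmem2
  have hc1 : 1 ≤ c := Multiset.one_le_count_iff_mem.mpr hmem3
  -- the sum of the three counts is the cardinality
  have hsum : a + b + c = v - 1 := by
    have h := Multiset.toFinset_sum_count_eq L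
    rw [hset] at h
    have e1 : ({s1, s2, s3} : Finset ℕ) = insert s1 {s2, s3} := rfl
    rw [e1, Finset.sum_insert (by simp [h12, h13]), Finset.sum_pair h23] at h
    omega
  set x := reducedForm v (t * s2 % v) with hx
  set y := reducedForm v (t * s3 % v) with hy
  have hcomp : ∀ d : ℕ, d ≤ v / 2 →
      reducedForm v (s1 * reducedForm v (t * d % v) % v) = d := by
    intro d hd
    exact comp_lemma v t s1 d hv hts' hd
  have hGs1 : reducedForm v (t * s1 % v) = 1 := by
    rw [hts', reducedForm]
    omega
  have hinv1 : reducedForm v (s1 * 1 % v) = s1 := by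
    have := hcomp s1 hs1b
    rwa [hGs1] at this
  have hinv2 : reducedForm v (s1 * x % v) = s2 := hcomp s2 hs2b
  have hinv3 : reducedForm v (s1 * y % v) = s3 := hcomp s3 hs3b
  have hx0 : x ≠ 0 := by
    intro h0
    have := hinv2
    rw [h0] at this
    simp [reducedForm] at this
    omega
  have hx1 : x ≠ 1 := by
    intro h0
    rw [h0] at hinv2
    rw [hinv1] at hinv2
    exact h12 hinv2
  have hxhalf : x ≤ v / 2 := red_le_half v _ hvpos
  have hyhalf : y ≤ v / 2 := red_le_half v _ hvpos
  have hxcop : Nat.gcd v x = 1 := coprime_red v t s1 s2 hts' hs2c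
  have hycop : Nat.gcd v y = 1 := coprime_red v t s1 s3 hts' hs3c
  have hreal := H v x y a b c hv (by omega) hlt hyhalf hxcop hycop ha1 hb1 hc1 hsum
    (by omega)
  have hmapped := realizable_map v s1 t hv hts (mset3 a b c x y) hreal
  have heq : (mset3 a b c x y).map (fun d => reducedForm v (s1 * d % v)) = L := by
    unfold mset3
    rw [Multiset.map_add, Multiset.map_add, Multiset.map_replicate,
      Multiset.map_replicate, Multiset.map_replicate, hinv1, hinv2, hinv3]
    ext z
    simp only [Multiset.count_add, Multiset.count_replicate]
    by_cases e1 : z = s1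
    · subst e1
      simp [h12, h13, Ne.symm h12, Ne.symm h13, ha]
    · by_cases e2 : z = s2
      · subst e2
        simp [h12, Ne.symm h12, h23, Ne.symm h23, hb]
      · by_cases e3 : z = s3
        · subst e3
          simp [h13, Ne.symm h13, h23, Ne.symm h23, hc]
        · have hz : z ∉ L := by
            intro hz
            have : z ∈ L.toFinset := Multiset.mem_toFinset.mpr hz
            rw [hset] at this
            simp at this
            tauto
          rw [Multiset.count_eq_zero.mpr hz]
          simp [Ne.symm e1, Ne.symm e2, Ne.symm e3]
  rwa [heq] at hmapped

lemma key
    (H : ∀ v x y a b c : ℕ, 2 ≤ v → 1 < x → x < y → y ≤ v / 2 →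
      Nat.gcd v x = 1 → Nat.gcd v y = 1 → 1 ≤ a → 1 ≤ b → 1 ≤ c →
      a + b + c = v - 1 → max b c ≤ a → IsRealizable v (mset3 a b c x y))
    (v : ℕ) (hv : 2 ≤ v) (L : Multiset ℕ) (hcard : Multiset.card L = v - 1)
    (s1 s2 s3 : ℕ) (h12 : s1 ≠ s2) (h13 : s1 ≠ s3) (h23 : s2 ≠ s3)
    (hset : L.toFinset = {s1, s2, s3})
    (hmem : ∀ z ∈ L, 1 ≤ z ∧ z ≤ v / 2 ∧ Nat.gcd v z = 1)
    (hmax2 : L.count s2 ≤ L.count s1) (hmax3 : L.count s3 ≤ L.count s1) :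
    IsRealizable v L := by
  haveI : NeZero v := ⟨by omega⟩
  have hmem1 : s1 ∈ L := by rw [← Multiset.mem_toFinset, hset]; simp
  have hmem2 : s2 ∈ L := by rw [← Multiset.mem_toFinset, hset]; simp
  have hmem3 : s3 ∈ L := by rw [← Multiset.mem_toFinset, hset]; simp
  obtain ⟨hs1a, hs1b, hs1c⟩ := hmem s1 hmem1
  obtain ⟨hs2a, hs2b, hs2c⟩ := hmem s2 hmem2
  obtain ⟨hs3a, hs3b, hs3c⟩ := hmem s3 hmem3
  obtain ⟨t, -, hts⟩ := Nat.exists_mul_mod_eq_one_of_coprime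
    (Nat.coprime_comm.mp hs1c) (by omega)
  have hts' : t * s1 % v = 1 := by rwa [mul_comm] at hts
  -- the two images are distinct
  have hne : reducedForm v (t * s2 % v) ≠ reducedForm v (t * s3 % v) := by
    intro he
    have h2 := comp_lemma v t s1 s2 hv hts' hs2b
    have h3 := comp_lemma v t s1 s3 hv hts' hs3b
    rw [he] at h2
    rw [h2] at h3
    exact h23 h3
  rcases lt_or_gt_of_ne hne with h | h
  · exact key2 H v hv L hcard s1 s2 s3 h12 h13 h23 hset hmem hmax2 hmax3 t hts h
  · refine key2 H v hv L hcard s1 s3 s2 h13 h12 (Ne.symm h23) ?_ hmem hmax3 hmax2 t hts h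
    rw [hset]
    ext z
    simp
    tauto

/-- If the Coprime BHR Conjecture holds for multisets
`{1^a, x^b, y^c}` with `a ≥ max(b, c)`, then it holds for all multisets with
support of size 3. -/
theorem stmt2
    (H : ∀ v x y a b c : ℕ, 2 ≤ v → 1 < x → x < y → y ≤ v / 2 →
      Nat.gcd v x = 1 → Nat.gcd v y = 1 → 1 ≤ a → 1 ≤ b → 1 ≤ c →
      a + b + c = v - 1 → max b c ≤ a → IsRealizable v (mset3 a b c x y)) :
    ∀ v : ℕ, 2 ≤ v → ∀ L : Multiset ℕ, Multiset.card L = v - 1 →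
      L.toFinset.card = 3 → (∀ z ∈ L, 1 ≤ z ∧ z ≤ v / 2 ∧ Nat.gcd v z = 1) →
      IsRealizable v L := by
  intro v hv L hcard hsupp hmem
  obtain ⟨s1, s2, s3, h12, h13, h23, hset⟩ := Finset.card_eq_three.mp hsupp
  have hperm : ∀ a b c : ℕ, ({a, b, c} : Finset ℕ) = {s1, s2, s3} →
      a ≠ b → a ≠ c → b ≠ c →
      L.count b ≤ L.count a → L.count c ≤ L.count a → IsRealizable v L := by
    intro a b c hs hab hac hbc hm1 hm2
    exact key H v hv L hcard a b c hab hac hbc (hset.trans hs.symm) hmem hm1 hm2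
  rcases le_total (L.count s1) (L.count s2) with h1 | h1
  · rcases le_total (L.count s2) (L.count s3) with h2 | h2
    · refine hperm s3 s1 s2 ?_ (Ne.symm h13) (Ne.symm h23) h12 (by omega) (by omega)
      ext z; simp; tauto
    · refine hperm s2 s1 s3 ?_ (Ne.symm h12) h23 h13 h1 h2
      ext z; simp; tauto
  · rcases le_total (L.count s1) (L.count s3) with h2 | h2
    · refine hperm s3 s1 s2 ?_ (Ne.symm h13) (Ne.symm h23) h12 h2 (by omega)
      ext z; simp; tauto
    · exact hperm s1 s2 s3 rfl h12 h13 h23 h1 h2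
end

section
/- Suppose that for every integer v ≥ 2, all integers x, y with 1 < x < y ≤ ⌊v/2⌋ and gcd(v,x) = gcd(v,y) = 1, and all integers a, b, c ≥ 1 with a + b + c = v − 1 and a + b ≥ y − 1, the multiset {1^a, x^b, y^c} is realizable. Then for every integer v ≥ 2, every multiset L of size v − 1 whose support consists of exactly three elements, all lying in {1, …, ⌊v/2⌋} and all coprime to v, is realizable. -/
section helpers

lemma cyc_step_le (v s a b : ℕ) (hv : 0 < v) (ha : a < v) (hb : b < v) (h : a ≤ b) :
    min ((s*a%v - s*b%v) + (s*b%v - s*a%v)) (v - ((s*a%v - s*b%v) + (s*b%v - s*a%v)))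
      = min (s * ((a-b)+(b-a)) % v) (v - s * ((a-b)+(b-a)) % v) := by
  have hA : s*a%v < v := Nat.mod_lt _ hv
  have hB : s*b%v < v := Nat.mod_lt _ hv
  have hm : s * ((a-b)+(b-a)) % v < v := Nat.mod_lt _ hv
  obtain ⟨k1, e1⟩ := (Nat.mod_modEq (s*a) v).dvd
  obtain ⟨k2, e2⟩ := (Nat.mod_modEq (s*b) v).dvd
  obtain ⟨k3, e3⟩ := (Nat.mod_modEq (s * ((a-b)+(b-a))) v).dvd
  have e : ((s*b : ℕ):ℤ) - ((s*a : ℕ):ℤ) - ((s * ((a-b)+(b-a)) : ℕ):ℤ) = 0 := by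
    push_cast [Nat.sub_eq_zero_of_le h, h]
    ring
  have key : ((s*b%v : ℕ) : ℤ) - ((s*a%v : ℕ) : ℤ) - ((s * ((a-b)+(b-a)) % v : ℕ) : ℤ)
      = (v:ℤ) * (k1 + k3 - k2) := by linear_combination e1 + e3 - e2 + e
  have hk1 : k1 + k3 - k2 ≤ 0 := by
    by_contra hcon
    push_neg at hcon
    have : (v:ℤ) * 1 ≤ (v:ℤ) * (k1 + k3 - k2) :=
      mul_le_mul_of_nonneg_left (by omega) (by positivity)
    omega
  have hk2 : -1 ≤ k1 + k3 - k2 := by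
    by_contra hcon
    push_neg at hcon
    have : (v:ℤ) * (k1 + k3 - k2) ≤ (v:ℤ) * (-2) :=
      mul_le_mul_of_nonneg_left (by omega) (by positivity)
    omega
  have : k1 + k3 - k2 = 0 ∨ k1 + k3 - k2 = -1 := by omega
  rcases this with h0 | h0 <;> rw [h0] at key <;> omega

lemma cyc_step (v s a b : ℕ) (hv : 0 < v) (ha : a < v) (hb : b < v) :
    min ((s*a%v - s*b%v) + (s*b%v - s*a%v)) (v - ((s*a%v - s*b%v) + (s*b%v - s*a%v)))
      = min (s * ((a-b)+(b-a)) % v) (v - s * ((a-b)+(b-a)) % v) := by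
  rcases le_total a b with h | h
  · exact cyc_step_le v s a b hv ha hb h
  · have := cyc_step_le v s b a hv hb ha h
    rw [show (a-b)+(b-a) = (b-a)+(a-b) from Nat.add_comm _ _]
    omega

lemma zipWith_map_congr {α β γ : Type*} (f : α → α → β) (g : α → α → γ) (ψ : γ → β) :
    ∀ (l1 l2 : List α), (∀ a ∈ l1, ∀ b ∈ l2, f a b = ψ (g a b)) →
      List.zipWith f l1 l2 = (List.zipWith g l1 l2).map ψ := by
  intro l1
  induction l1 with
  | nil => intro l2 _; simp
  | cons a t ih =>
    intro l2 hp
    cases l2 with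
    | nil => simp
    | cons b t2 =>
      simp only [List.zipWith_cons_cons, List.map_cons]
      rw [hp a (by simp) b (by simp), ih t2 fun x hx y hy => hp x (by simp [hx]) y (by simp [hy])]

lemma red_mul_compl (v s D : ℕ) (hv : 0 < v) (hD : D ≤ v) :
    min (s*(v-D)%v) (v - s*(v-D)%v) = min (s*D%v) (v - s*D%v) := by
  have hm1 : s*(v-D)%v < v := Nat.mod_lt _ hv
  have hm2 : s*D%v < v := Nat.mod_lt _ hv
  have hdvd : v ∣ s*(v-D)%v + s*D%v := by
    have h1 : s*(v-D)%v + s*D%v ≡ s*(v-D) + s*D [MOD v] :=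
      (Nat.mod_modEq (s*(v-D)) v).add (Nat.mod_modEq (s*D) v)
    have h2 : s*(v-D) + s*D = s*v := by rw [← Nat.mul_add]; congr 1; omega
    rw [h2] at h1
    have h3 := h1.trans (show s*v ≡ 0 [MOD v] by
      unfold Nat.ModEq; simp [Nat.mul_mod_left])
    unfold Nat.ModEq at h3
    simpa using Nat.dvd_of_mod_eq_zero h3
  rcases Nat.eq_zero_or_pos (s*(v-D)%v + s*D%v) with h0 | h0
  · omega
  · have hle : v ≤ s*(v-D)%v + s*D%v := Nat.le_of_dvd h0 hdvd
    have h4 : v ∣ (s*(v-D)%v + s*D%v) - v := Nat.dvd_sub hdvd dvd_rfl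
    have h5 := Nat.eq_zero_of_dvd_of_lt h4 (show (s*(v-D)%v + s*D%v) - v < v by omega)
    omega

lemma cyc_step' (v s a b : ℕ) (hv : 0 < v) (ha : a < v) (hb : b < v) :
    min ((s*a%v - s*b%v) + (s*b%v - s*a%v)) (v - ((s*a%v - s*b%v) + (s*b%v - s*a%v)))
      = min (s * (min ((a-b)+(b-a)) (v - ((a-b)+(b-a)))) % v)
          (v - s * (min ((a-b)+(b-a)) (v - ((a-b)+(b-a)))) % v) := by
  rcases le_total ((a-b)+(b-a)) (v - ((a-b)+(b-a))) with hc | hc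
  · rw [min_eq_left hc]
    exact cyc_step v s a b hv ha hb
  · rw [min_eq_right hc]
    rw [red_mul_compl v s ((a-b)+(b-a)) hv (by omega)]
    exact cyc_step v s a b hv ha hb

lemma cycDiffs_map (v s : ℕ) (hv : 0 < v) (l : List ℕ) (hl : ∀ g ∈ l, g < v) :
    cycDiffs v (l.map (fun g => s*g % v))
      = (cycDiffs v l).map (fun d => reducedForm v (s*d % v)) := by
  unfold cycDiffs reducedForm
  rw [Multiset.map_coe]
  congr 1
  rw [← List.map_tail, List.zipWith_map_left, List.zipWith_map_right]
  exact zipWith_map_congr _ _ _ l l.tail fun a haa b hbb =>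
    cyc_step' v s a b hv (hl a haa) (hl b (List.mem_of_mem_tail hbb))

lemma perm_mul (v s : ℕ) (hv : 0 < v) (hs : Nat.gcd v s = 1) (l : List ℕ)
    (hl : l.Perm (List.range v)) : (l.map (fun g => s*g%v)).Perm (List.range v) := by
  refine (hl.map _).trans ?_
  have hinj : ∀ x ∈ List.range v, ∀ y ∈ List.range v,
      s*x%v = s*y%v → x = y := by
    intro x hx y hy hxy
    have hmeq : x ≡ y [MOD v] := Nat.ModEq.cancel_left_of_coprime hs hxy
    rw [List.mem_range] at hx hy
    unfold Nat.ModEq at hmeq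
    rwa [Nat.mod_eq_of_lt hx, Nat.mod_eq_of_lt hy] at hmeq
  have hnd : ((List.range v).map (fun g => s*g%v)).Nodup :=
    (List.nodup_range (n := v)).map_on hinj
  have hsub : (List.range v).map (fun g => s*g%v) ⊆ List.range v := by
    intro x hx
    rw [List.mem_map] at hx
    obtain ⟨g, _, rfl⟩ := hx
    exact List.mem_range.mpr (Nat.mod_lt _ hv)
  exact (hnd.subperm hsub).perm_of_length_le (by simp)

lemma gcd_one_of_mul_mod (v p t : ℕ) (hpt : p * t % v = 1) : Nat.gcd v t = 1 := by
  have h := Nat.div_add_mod (p*t) v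
  rw [hpt] at h
  have d1 : Nat.gcd v t ∣ p * t := Dvd.dvd.mul_left (Nat.gcd_dvd_right v t) p
  have d2 : Nat.gcd v t ∣ v * (p*t/v) := Dvd.dvd.mul_right (Nat.gcd_dvd_left v t) _
  have d3 : Nat.gcd v t ∣ p*t - v*(p*t/v) := Nat.dvd_sub d1 d2
  rw [show p*t - v*(p*t/v) = 1 by omega] at d3
  exact Nat.eq_one_of_dvd_one d3

lemma mod_ne_zero_of_coprime (v t w : ℕ) (hv : 2 ≤ v) (htv : Nat.gcd v t = 1)
    (hwv : Nat.gcd v w = 1) : t * w % v ≠ 0 := by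
  intro h0
  have hdvd : v ∣ t*w := Nat.dvd_of_mod_eq_zero h0
  have hcop : Nat.Coprime v (t*w) := Nat.Coprime.mul_right htv hwv
  have := Nat.Coprime.eq_one_of_dvd hcop hdvd
  omega

lemma psi_phi (v p t z : ℕ) (hv : 2 ≤ v) (hpt : p * t % v = 1)
    (hz1 : 1 ≤ z) (hz2 : z ≤ v/2) (hzv : Nat.gcd v z = 1) :
    reducedForm v (p * (reducedForm v (t*z % v)) % v) = z := by
  have hv0 : 0 < v := by omega
  have htv : Nat.gcd v t = 1 := gcd_one_of_mul_mod v p t hpt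
  have hnv : t*z % v < v := Nat.mod_lt _ hv0
  have hn0 : t*z % v ≠ 0 := mod_ne_zero_of_coprime v t z hv htv hzv
  have hmod : p * (t*z % v) ≡ z [MOD v] := by
    calc p * (t*z % v) ≡ p * (t*z) [MOD v] := ((Nat.mod_modEq (t*z) v)).mul_left p
    _ = (p*t)*z := by ring
    _ ≡ 1*z [MOD v] := Nat.ModEq.mul_right z (show p*t ≡ 1 [MOD v] by
        unfold Nat.ModEq; rw [hpt]; exact (Nat.mod_eq_of_lt (by omega)).symm)
    _ = z := by ring
  have hpn : p * (t*z % v) % v = z := by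
    unfold Nat.ModEq at hmod
    rwa [Nat.mod_eq_of_lt (by omega : z < v)] at hmod
  unfold reducedForm
  rcases le_total (t*z % v) (v - t*z % v) with hcc | hcc
  · rw [min_eq_left hcc, hpn]
    omega
  · rw [min_eq_right hcc]
    have hMz : v ∣ p*(v - t*z % v)%v + z := by
      have h1 : p*(v - t*z % v)%v + z ≡ p*(v - t*z % v) + p*(t*z % v) [MOD v] :=
        (Nat.mod_modEq (p*(v - t*z % v)) v).add hmod.symm
      have h2 : p*(v - t*z % v) + p*(t*z % v) = p*v := by
        rw [← Nat.mul_add]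
        congr 1
        omega
      rw [h2] at h1
      have h3 : (p*(v - t*z % v)%v + z) % v = 0 := by
        have h4 := h1.trans (show p*v ≡ 0 [MOD v] by
          unfold Nat.ModEq; simp [Nat.mul_mod_left])
        unfold Nat.ModEq at h4
        simpa using h4
      exact Nat.dvd_of_mod_eq_zero h3
    have hM : p*(v - t*z % v)%v < v := Nat.mod_lt _ hv0
    have hle : v ≤ p*(v - t*z % v)%v + z := Nat.le_of_dvd (by omega) hMz
    have h4 : v ∣ (p*(v - t*z % v)%v + z) - v := Nat.dvd_sub hMz dvd_rfl
    have h5 : (p*(v - t*z % v)%v + z) - v = 0 :=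
      Nat.eq_zero_of_dvd_of_lt h4 (by omega)
    omega
end helpers

section part2

lemma red_lb (v n : ℕ) (hv : 2 ≤ v) (hn : n < v) (hn0 : n ≠ 0) :
    1 ≤ reducedForm v n ∧ reducedForm v n ≤ v / 2 := by
  unfold reducedForm; omega

lemma phi_gcd (v t w : ℕ) (hv : 2 ≤ v) (htv : Nat.gcd v t = 1)
    (hwv : Nat.gcd v w = 1) : Nat.gcd v (reducedForm v (t*w % v)) = 1 := by
  have hv0 : 0 < v := by omega
  have hgn : Nat.gcd v (t*w % v) = 1 := by
    have hcop : Nat.Coprime v (t*w) := Nat.Coprime.mul_right htv hwv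
    rw [Nat.gcd_comm, ← Nat.gcd_rec]
    exact hcop
  unfold reducedForm
  rcases le_total (t*w % v) (v - t*w % v) with hc | hc
  · rw [min_eq_left hc]; exact hgn
  · rw [min_eq_right hc]
    have d1 : Nat.gcd v (v - t*w % v) ∣ t*w % v := by
      have h1 : Nat.gcd v (v - t*w % v) ∣ v := Nat.gcd_dvd_left _ _
      have h2 : Nat.gcd v (v - t*w % v) ∣ v - t*w % v := Nat.gcd_dvd_right _ _
      have h3 := Nat.dvd_sub h1 h2
      rwa [show v - (v - t*w % v) = t*w % v by
        have := Nat.mod_lt (t*w) hv0; omega] at h3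
    have d2 : Nat.gcd v (v - t*w % v) ∣ Nat.gcd v (t*w % v) :=
      Nat.dvd_gcd (Nat.gcd_dvd_left _ _) d1
    rw [hgn] at d2
    exact Nat.eq_one_of_dvd_one d2

lemma phi_inj (v t w1 w2 : ℕ) (hv : 2 ≤ v) (htv : Nat.gcd v t = 1)
    (h11 : 1 ≤ w1) (h12 : w1 ≤ v/2) (h21 : 1 ≤ w2) (h22 : w2 ≤ v/2) (hne : w1 ≠ w2) :
    reducedForm v (t*w1 % v) ≠ reducedForm v (t*w2 % v) := by
  have hv0 : 0 < v := by omega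
  have hn1 : t*w1 % v < v := Nat.mod_lt _ hv0
  have hn2 : t*w2 % v < v := Nat.mod_lt _ hv0
  intro heq
  unfold reducedForm at heq
  have hcases : t*w1 % v = t*w2 % v ∨ t*w1 % v + t*w2 % v = v := by omega
  rcases hcases with hc | hc
  · have hmeq : w1 ≡ w2 [MOD v] := Nat.ModEq.cancel_left_of_coprime htv hc
    unfold Nat.ModEq at hmeq
    rw [Nat.mod_eq_of_lt (by omega), Nat.mod_eq_of_lt (by omega)] at hmeq
    exact hne hmeq
  · have h1 : t*w1 + t*w2 ≡ t*w1 % v + t*w2 % v [MOD v] :=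
      ((Nat.mod_modEq (t*w1) v).symm).add ((Nat.mod_modEq (t*w2) v).symm)
    rw [hc] at h1
    have h2 : t*(w1+w2) ≡ t*0 [MOD v] := by
      rw [Nat.mul_add]
      exact h1.trans (show v ≡ t*0 [MOD v] by unfold Nat.ModEq; simp)
    have h3 : w1 + w2 ≡ 0 [MOD v] := Nat.ModEq.cancel_left_of_coprime htv h2
    have h4 : v ∣ w1 + w2 := (Nat.modEq_zero_iff_dvd).mp h3
    have h5 : v ≤ w1 + w2 := Nat.le_of_dvd (by omega) h4
    omega

lemma phi_base (v p t : ℕ) (hv : 2 ≤ v) (hpt : p * t % v = 1) :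
    reducedForm v (t*p % v) = 1 := by
  rw [mul_comm t p, hpt]
  unfold reducedForm
  omega

lemma transfer (v p t : ℕ) (hv : 2 ≤ v) (hpv : Nat.gcd v p = 1) (hpt : p * t % v = 1)
    (L : Multiset ℕ) (hL : ∀ z ∈ L, 1 ≤ z ∧ z ≤ v/2 ∧ Nat.gcd v z = 1)
    (hreal : IsRealizable v (L.map (fun z => reducedForm v (t*z % v)))) :
    IsRealizable v L := by
  obtain ⟨l, hperm, hdiff⟩ := hreal
  have hv0 : 0 < v := by omega
  refine ⟨l.map (fun g => p*g % v), perm_mul v p hv0 hpv l hperm, ?_⟩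
  have hlt : ∀ g ∈ l, g < v := fun g hg =>
    List.mem_range.mp ((hperm.mem_iff).mp hg)
  rw [cycDiffs_map v p hv0 l hlt, hdiff, Multiset.map_map]
  have hid : L.map ((fun d => reducedForm v (p*d % v)) ∘ (fun z => reducedForm v (t*z % v)))
      = L.map id := by
    refine Multiset.map_congr rfl fun z hz => ?_
    obtain ⟨h1, h2, h3⟩ := hL z hz
    exact psi_phi v p t z hv hpt h1 h2 h3
  rw [hid, Multiset.map_id]

end part2

lemma stmt3_aux
    (H : ∀ v x y a b c : ℕ, 2 ≤ v → 1 < x → x < y → y ≤ v / 2 →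
      Nat.gcd v x = 1 → Nat.gcd v y = 1 → 1 ≤ a → 1 ≤ b → 1 ≤ c →
      a + b + c = v - 1 → y - 1 ≤ a + b → IsRealizable v (mset3 a b c x y))
    (v p q r a b c : ℕ) (hv : 2 ≤ v)
    (hpq : p ≠ q) (hpr : p ≠ r) (hqr : q ≠ r)
    (hp1 : 1 ≤ p) (hp2 : p ≤ v/2) (hp3 : Nat.gcd v p = 1)
    (hq1 : 1 ≤ q) (hq2 : q ≤ v/2) (hq3 : Nat.gcd v q = 1)
    (hr1 : 1 ≤ r) (hr2 : r ≤ v/2) (hr3 : Nat.gcd v r = 1)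
    (ha : 1 ≤ a) (hb : 1 ≤ b) (hc : 1 ≤ c)
    (hba : b ≤ a) (hca : c ≤ a) (hsum : a + b + c = v - 1) :
    IsRealizable v (Multiset.replicate a p + Multiset.replicate b q + Multiset.replicate c r) := by
  obtain ⟨t, -, hpt⟩ := Nat.exists_mul_mod_eq_one_of_coprime
    (Nat.Coprime.symm (show Nat.Coprime v p from hp3)) (by omega)
  have htv : Nat.gcd v t = 1 := gcd_one_of_mul_mod v p t hpt
  set x0 := reducedForm v (t*q % v) with hx0
  set y0 := reducedForm v (t*r % v) with hy0
  have hx0p := red_lb v (t*q % v) hv (Nat.mod_lt _ (by omega))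
    (mod_ne_zero_of_coprime v t q hv htv hq3)
  have hy0p := red_lb v (t*r % v) hv (Nat.mod_lt _ (by omega))
    (mod_ne_zero_of_coprime v t r hv htv hr3)
  have hx0g : Nat.gcd v x0 = 1 := phi_gcd v t q hv htv hq3
  have hy0g : Nat.gcd v y0 = 1 := phi_gcd v t r hv htv hr3
  have hx0ne1 : x0 ≠ 1 := by
    rw [hx0, ← phi_base v p t hv hpt]
    exact phi_inj v t q p hv htv hq1 hq2 hp1 hp2 (Ne.symm hpq)
  have hy0ne1 : y0 ≠ 1 := by
    rw [hy0, ← phi_base v p t hv hpt]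
    exact phi_inj v t r p hv htv hr1 hr2 hp1 hp2 (Ne.symm hpr)
  have hxy0 : x0 ≠ y0 := phi_inj v t q r hv htv hq1 hq2 hr1 hr2 hqr
  have hmapeq : (Multiset.replicate a p + Multiset.replicate b q
      + Multiset.replicate c r).map (fun z => reducedForm v (t*z % v))
      = Multiset.replicate a 1 + Multiset.replicate b x0 + Multiset.replicate c y0 := by
    simp only [Multiset.map_add, Multiset.map_replicate]
    rw [phi_base v p t hv hpt]
  have hmem : ∀ z ∈ (Multiset.replicate a p + Multiset.replicate b q
      + Multiset.replicate c r), 1 ≤ z ∧ z ≤ v/2 ∧ Nat.gcd v z = 1 := by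
    intro z hz
    rcases Multiset.mem_add.mp hz with hz1 | hz1
    · rcases Multiset.mem_add.mp hz1 with hz2 | hz2
      · rw [Multiset.eq_of_mem_replicate hz2]; exact ⟨hp1, hp2, hp3⟩
      · rw [Multiset.eq_of_mem_replicate hz2]; exact ⟨hq1, hq2, hq3⟩
    · rw [Multiset.eq_of_mem_replicate hz1]; exact ⟨hr1, hr2, hr3⟩
  apply transfer v p t hv hp3 hpt _ hmem
  rw [hmapeq]
  rcases lt_or_gt_of_ne hxy0 with hlt | hlt
  · have hre := H v x0 y0 a b c hv (by omega) hlt hy0p.2 hx0g hy0g ha hb hc hsum (by omega)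
    simpa [mset3] using hre
  · have hre := H v y0 x0 a c b hv (by omega) hlt hx0p.2 hy0g hx0g ha hc hb (by omega) (by omega)
    rw [show Multiset.replicate a 1 + Multiset.replicate b x0 + Multiset.replicate c y0
      = Multiset.replicate a 1 + Multiset.replicate c y0 + Multiset.replicate b x0 from
      add_right_comm _ _ _]
    simpa [mset3] using hre


/-- If the Coprime BHR Conjecture holds for multisets
`{1^a, x^b, y^c}` with `a + b ≥ y - 1`, then it holds for all multisets with
support of size 3. -/
theorem stmt3
    (H : ∀ v x y a b c : ℕ, 2 ≤ v → 1 < x → x < y → y ≤ v / 2 →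
      Nat.gcd v x = 1 → Nat.gcd v y = 1 → 1 ≤ a → 1 ≤ b → 1 ≤ c →
      a + b + c = v - 1 → y - 1 ≤ a + b → IsRealizable v (mset3 a b c x y)) :
    ∀ v : ℕ, 2 ≤ v → ∀ L : Multiset ℕ, Multiset.card L = v - 1 →
      L.toFinset.card = 3 → (∀ z ∈ L, 1 ≤ z ∧ z ≤ v / 2 ∧ Nat.gcd v z = 1) →
      IsRealizable v L := by
  intro v hv L hcard hsupp hL
  obtain ⟨p, q, r, hpq, hpr, hqr, hset⟩ := Finset.card_eq_three.mp hsupp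
  have hpL : p ∈ L := by
    rw [← Multiset.mem_toFinset, hset]; simp
  have hqL : q ∈ L := by
    rw [← Multiset.mem_toFinset, hset]; simp
  have hrL : r ∈ L := by
    rw [← Multiset.mem_toFinset, hset]; simp
  obtain ⟨hp1, hp2, hp3⟩ := hL p hpL
  obtain ⟨hq1, hq2, hq3⟩ := hL q hqL
  obtain ⟨hr1, hr2, hr3⟩ := hL r hrL
  have hdec : L = Multiset.replicate (L.count p) p + Multiset.replicate (L.count q) q
      + Multiset.replicate (L.count r) r := by
    refine Multiset.ext.mpr fun e => ?_
    simp only [Multiset.count_add, Multiset.count_replicate]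
    by_cases h1 : e = p
    · subst h1
      rw [if_pos rfl, if_neg (Ne.symm hpq), if_neg (Ne.symm hpr)]
      omega
    · by_cases h2 : e = q
      · subst h2
        rw [if_neg (fun h => h1 h.symm), if_pos rfl, if_neg (Ne.symm hqr)]
        omega
      · by_cases h3 : e = r
        · subst h3
          rw [if_neg (fun h => h1 h.symm), if_neg (fun h => h2 h.symm), if_pos rfl]
          omega
        · rw [if_neg (fun h => h1 h.symm), if_neg (fun h => h2 h.symm), if_neg (fun h => h3 h.symm)]
          have : e ∉ L := by
            intro hmem
            have he : e ∈ L.toFinset := Multiset.mem_toFinset.mpr hmem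
            rw [hset] at he
            simp only [Finset.mem_insert, Finset.mem_singleton] at he
            tauto
          rw [Multiset.count_eq_zero_of_notMem this]
  have hap : 1 ≤ L.count p := Multiset.count_pos.mpr hpL
  have haq : 1 ≤ L.count q := Multiset.count_pos.mpr hqL
  have har : 1 ≤ L.count r := Multiset.count_pos.mpr hrL
  have hsum : L.count p + L.count q + L.count r = v - 1 := by
    have hc2 := hcard
    rw [hdec] at hc2
    simpa [Multiset.card_replicate] using hc2
  rw [hdec]
  rcases le_total (L.count p) (L.count q) with h1 | h1
  · rcases le_total (L.count q) (L.count r) with h2 | h2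
    · -- r has max count
      have h := stmt3_aux H v r p q (L.count r) (L.count p) (L.count q) hv
        (Ne.symm hpr) (Ne.symm hqr) hpq hr1 hr2 hr3 hp1 hp2 hp3 hq1 hq2 hq3
        har hap haq (by omega) (by omega) (by omega)
      rwa [show Multiset.replicate (L.count r) r + Multiset.replicate (L.count p) p
        + Multiset.replicate (L.count q) q = Multiset.replicate (L.count p) p
        + Multiset.replicate (L.count q) q + Multiset.replicate (L.count r) r by
        abel] at h
    · -- q has max count
      have h := stmt3_aux H v q p r (L.count q) (L.count p) (L.count r) hv
        (Ne.symm hpq) hqr hpr hq1 hq2 hq3 hp1 hp2 hp3 hr1 hr2 hr3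
        haq hap har h1 h2 (by omega)
      rwa [show Multiset.replicate (L.count q) q + Multiset.replicate (L.count p) p
        + Multiset.replicate (L.count r) r = Multiset.replicate (L.count p) p
        + Multiset.replicate (L.count q) q + Multiset.replicate (L.count r) r by
        abel] at h
  · rcases le_total (L.count p) (L.count r) with h2 | h2
    · -- r has max count
      have h := stmt3_aux H v r p q (L.count r) (L.count p) (L.count q) hv
        (Ne.symm hpr) (Ne.symm hqr) hpq hr1 hr2 hr3 hp1 hp2 hp3 hq1 hq2 hq3
        har hap haq h2 (by omega) (by omega)
      rwa [show Multiset.replicate (L.count r) r + Multiset.replicate (L.count p) p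
        + Multiset.replicate (L.count q) q = Multiset.replicate (L.count p) p
        + Multiset.replicate (L.count q) q + Multiset.replicate (L.count r) r by
        abel] at h
    · -- p has max count
      exact stmt3_aux H v p q r (L.count p) (L.count q) (L.count r) hv
        hpq hpr hqr hp1 hp2 hp3 hq1 hq2 hq3 hr1 hr2 hr3
        hap haq har h1 h2 hsum
end

section
/- Let L be a multiset of size v−1 that has a standard linear realization and let M be a multiset of size w−1 that has a standard linear realization. Then the multiset union L ∪ M (of size v+w−2) has a linear realization. If the realization of M is perfect, then L ∪ M has a standard linear realization, and if the realizations of both L and M are perfect, then L ∪ M has a perfect linear realization. Moreover, if L has a standard (respectively perfect) linear realization, then for every integer s ≥ 0 the multiset L ∪ {1^s} has a standard (respectively perfect) linear realization. -/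
/-- Auxiliary recursive version of consecutive absolute differences. -/
def dlist : List ℕ → List ℕ
  | a :: b :: t => ((a - b) + (b - a)) :: dlist (b :: t)
  | _ => []

lemma zipWith_eq_dlist : ∀ l : List ℕ,
    List.zipWith (fun a b => (a - b) + (b - a)) l l.tail = dlist l
  | [] => rfl
  | [_] => rfl
  | a :: b :: t => by
    have := zipWith_eq_dlist (b :: t)
    simp only [List.tail_cons] at this ⊢
    rw [List.zipWith, this, dlist]

lemma dlist_cons (b : ℕ) : ∀ (z : List ℕ), z ≠ [] →
    dlist (b :: z) = ((b - z.headI) + (z.headI - b)) :: dlist z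
  | [], h => absurd rfl h
  | _ :: _, _ => rfl

lemma dlist_glue : ∀ (x : List ℕ) (a : ℕ) (y : List ℕ),
    dlist (x ++ a :: y) = dlist (x ++ [a]) ++ dlist (a :: y)
  | [], a, y => by simp [dlist]
  | b :: x, a, y => by
    have h1 : (x ++ a :: y) ≠ [] := by simp
    have h2 : (x ++ [a]) ≠ [] := by simp
    have hh : (x ++ a :: y).headI = (x ++ [a]).headI := by cases x <;> rfl
    rw [List.cons_append, dlist_cons b _ h1, List.cons_append, dlist_cons b _ h2,
        dlist_glue x a y, hh, List.cons_append]

lemma dlist_reverse : ∀ l : List ℕ, dlist l.reverse = (dlist l).reverse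
  | [] => rfl
  | [_] => rfl
  | a :: b :: t => by
    have ih := dlist_reverse (b :: t)
    have h1 : (a :: b :: t).reverse = t.reverse ++ b :: [a] := by simp
    have h2 : (b :: t).reverse = t.reverse ++ [b] := by simp
    have h3 : dlist [b, a] = [(a - b) + (b - a)] := by
      show [(b - a) + (a - b)] = _
      rw [Nat.add_comm]
    rw [h1, dlist_glue, ← h2, ih, h3, dlist, List.reverse_cons]

lemma dlist_map_add (k : ℕ) : ∀ l : List ℕ, dlist (l.map (· + k)) = dlist l
  | [] => rfl
  | [_] => rfl
  | a :: b :: t => by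
    have := dlist_map_add k (b :: t)
    simp only [List.map_cons] at this ⊢
    rw [dlist, dlist, this]
    congr 1
    omega

lemma dlist_map_sub (c : ℕ) : ∀ l : List ℕ, (∀ x ∈ l, x ≤ c) →
    dlist (l.map (fun x => c - x)) = dlist l
  | [], _ => rfl
  | [_], _ => rfl
  | a :: b :: t, h => by
    have := dlist_map_sub c (b :: t) (fun x hx => h x (List.mem_cons_of_mem a hx))
    simp only [List.map_cons] at this ⊢
    rw [dlist, dlist, this]
    have ha : a ≤ c := h a (by simp)
    have hb : b ≤ c := h b (by simp)
    congr 1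
    omega

lemma dlist_range' : ∀ (n s : ℕ), dlist (List.range' s n) = List.replicate (n - 1) 1
  | 0, s => rfl
  | 1, s => rfl
  | n + 2, s => by
    rw [List.range'_succ, List.range'_succ, dlist, ← List.range'_succ,
        dlist_range' (n + 1) (s + 1), show n + 2 - 1 = n + 1 from rfl,
        List.replicate_succ]
    congr 1
    omega

lemma linDiffs_eq (l : List ℕ) : linDiffs l = ↑(dlist l) := by
  rw [linDiffs, zipWith_eq_dlist]

lemma perm_map_sub {n : ℕ} {l : List ℕ} (h : l.Perm (List.range (n + 1))) :
    (l.map (fun x => n - x)).Perm (List.range (n + 1)) := by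
  have key : (List.range (n + 1)).map (fun x => n - x) = (List.range (n + 1)).reverse := by
    rw [show List.range (n + 1) = List.range' 0 (n + 1) from List.range_eq_range',
        List.reverse_range', ← List.range_eq_range']
    apply List.map_congr_left
    intro x hx
    simp only [List.mem_range] at hx
    omega
  refine (h.map _).trans ?_
  rw [key]
  exact List.reverse_perm _

lemma perm_map_add {n : ℕ} {l : List ℕ} (a : ℕ) (h : l.Perm (List.range n)) :
    (l.map (· + a)).Perm (List.range' a n) := by
  refine (h.map _).trans ?_
  have : (List.range n).map (· + a) = (List.range n).map (a + ·) := by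
    apply List.map_congr_left; intro x _; omega
  rw [this, ← List.range'_eq_map_range]

lemma range_append_range' (a b : ℕ) :
    List.range a ++ List.range' a b = List.range (a + b) := by
  have h1 : List.range' 0 a 1 ++ List.range' (0 + 1 * a) b 1 = List.range' 0 (b + a) 1 := by
    rw [List.range'_append, Nat.add_comm b a]
  simp only [Nat.one_mul, Nat.zero_add] at h1
  have h2 : List.range (a + b) = List.range' 0 (b + a) := by
    rw [List.range_eq_range']; congr 1; omega
  rw [List.range_eq_range', h2, ← h1]

lemma mem_le_of_perm_range {n : ℕ} {l : List ℕ} (h : l.Perm (List.range (n + 1)))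
    {x : ℕ} (hx : x ∈ l) : x ≤ n := by
  have := h.mem_iff.mp hx
  simp only [List.mem_range] at this
  omega

lemma step1 {L M : Multiset ℕ} (hL : HasStandardLinearRealization L)
    (hM : HasStandardLinearRealization M) : HasLinearRealization (L + M) := by
  obtain ⟨l, ⟨hlp, hld⟩, hl0⟩ := hL
  obtain ⟨m, ⟨hmp, hmd⟩, hm0⟩ := hM
  set a := Multiset.card L with ha
  set b := Multiset.card M with hb
  obtain ⟨lt, rfl⟩ : ∃ lt, l = 0 :: lt := by
    cases l with
    | nil => simp at hl0
    | cons x t => simp at hl0; subst hl0; exact ⟨t, rfl⟩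
  obtain ⟨mt, rfl⟩ : ∃ mt, m = 0 :: mt := by
    cases m with
    | nil => simp at hm0
    | cons x t => simp at hm0; subst hm0; exact ⟨t, rfl⟩
  have hle : ∀ x ∈ (0 :: lt), x ≤ a := fun x hx => mem_le_of_perm_range hlp hx
  set lt' := lt.map (fun x => a - x) with hlt'
  have hcompl : (0 :: lt).map (fun x => a - x) = a :: lt' := by simp [hlt']
  have hx' : ((0 :: mt).map (· + a)).reverse = (mt.map (· + a)).reverse ++ [a] := by simp
  refine ⟨(mt.map (· + a)).reverse ++ a :: lt', ?_, ?_⟩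
  · have h1 : (((0 :: mt).map (· + a)).reverse).Perm (List.range' a (b + 1)) :=
      (List.reverse_perm _).trans (perm_map_add a hmp)
    have h2 : (a :: lt').Perm (List.range (a + 1)) := hcompl ▸ perm_map_sub hlp
    have h3 : lt'.Perm (List.range a) := by
      refine List.Perm.cons_inv (a := a) ?_
      exact h2.trans (by rw [List.range_succ]; exact List.perm_append_comm)
    have e1 : (mt.map (· + a)).reverse ++ a :: lt'
        = ((0 :: mt).map (· + a)).reverse ++ lt' := by rw [hx']; simp
    rw [e1]
    refine ((h1.append h3).trans List.perm_append_comm).trans ?_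
    rw [range_append_range' a (b + 1)]
    have : Multiset.card (L + M) + 1 = a + (b + 1) := by rw [Multiset.card_add]; omega
    rw [this]
  · rw [linDiffs_eq, dlist_glue, ← hx', dlist_reverse, ← hcompl,
        dlist_map_sub a _ hle, dlist_map_add]
    rw [← Multiset.coe_add, Multiset.coe_reverse]
    rw [show ((dlist (0 :: mt) : Multiset ℕ) = M) from by rw [← linDiffs_eq]; exact hmd,
        show ((dlist (0 :: lt) : Multiset ℕ) = L) from by rw [← linDiffs_eq]; exact hld]
    exact add_comm M L

lemma step2 {L M : Multiset ℕ} (hL : HasStandardLinearRealization L)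
    (hM : HasPerfectLinearRealization M) : HasStandardLinearRealization (L + M) := by
  obtain ⟨l, ⟨hlp, hld⟩, hl0⟩ := hL
  obtain ⟨m, ⟨hmp, hmd⟩, hm0, hmb⟩ := hM
  set a := Multiset.card L with ha
  set b := Multiset.card M with hb
  set c := a + b with hc
  obtain ⟨lt, rfl⟩ : ∃ lt, l = 0 :: lt := by
    cases l with
    | nil => simp at hl0
    | cons x t => simp at hl0; subst hl0; exact ⟨t, rfl⟩
  have hle : ∀ x ∈ (0 :: lt), x ≤ a := fun x hx => mem_le_of_perm_range hlp hx
  have hme : ∀ x ∈ m, x ≤ b := fun x hx => mem_le_of_perm_range hmp hx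
  set lt' := lt.map (fun x => a - x) with hlt'
  have hcompl : (0 :: lt).map (fun x => a - x) = a :: lt' := by simp [hlt']
  set g : ℕ → ℕ := fun x => (b - x) + a with hg
  have hgm : m.map g = (m.map (fun x => b - x)).map (· + a) := by simp [hg]
  obtain ⟨ms, hms⟩ : ∃ ms, m = ms ++ [b] := List.getLast?_eq_some_iff.mp hmb
  have hu : m.map g = ms.map g ++ [a] := by rw [hms]; simp [hg]
  set t := ms.map g ++ a :: lt' with ht
  have htd : (dlist t : Multiset ℕ) = M + L := by
    rw [ht, dlist_glue, ← hu, hgm, dlist_map_add, dlist_map_sub b m hme, ← hcompl,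
        dlist_map_sub a _ hle]
    rw [← Multiset.coe_add]
    rw [show ((dlist m : Multiset ℕ) = M) from by rw [← linDiffs_eq]; exact hmd,
        show ((dlist (0 :: lt) : Multiset ℕ) = L) from by rw [← linDiffs_eq]; exact hld]
  have htp : t.Perm (List.range (c + 1)) := by
    have h1 : (m.map g).Perm (List.range' a (b + 1)) := by
      rw [hgm]; exact perm_map_add a (perm_map_sub hmp)
    have h2 : (a :: lt').Perm (List.range (a + 1)) := hcompl ▸ perm_map_sub hlp
    have h3 : lt'.Perm (List.range a) := by
      refine List.Perm.cons_inv (a := a) ?_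
      exact h2.trans (by rw [List.range_succ]; exact List.perm_append_comm)
    have e1 : t = m.map g ++ lt' := by rw [ht, hu]; simp
    rw [e1]
    refine ((h1.append h3).trans List.perm_append_comm).trans ?_
    rw [range_append_range' a (b + 1), show a + (b + 1) = c + 1 from by omega]
  have hte : ∀ x ∈ t, x ≤ c := fun x hx => mem_le_of_perm_range htp hx
  refine ⟨t.map (fun x => c - x), ⟨?_, ?_⟩, ?_⟩
  · have : Multiset.card (L + M) = c := by rw [Multiset.card_add]
    rw [this]
    exact perm_map_sub htp
  · rw [linDiffs_eq, dlist_map_sub c t hte, htd]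
    exact add_comm M L
  · cases ms with
    | nil =>
      have hb0 : b = 0 := by
        rw [hms] at hm0; simpa using hm0
      rw [ht]
      simp [hb0, hc]
    | cons m0 ms' =>
      have hm00 : m0 = 0 := by
        rw [hms] at hm0; simpa using hm0
      rw [ht]
      simp only [List.map_cons, List.cons_append, List.head?_cons, hm00, hg]
      congr 1
      omega

lemma step3 {L M : Multiset ℕ} (hL : HasPerfectLinearRealization L)
    (hM : HasPerfectLinearRealization M) : HasPerfectLinearRealization (L + M) := by
  obtain ⟨l, ⟨hlp, hld⟩, hl0, hla⟩ := hL
  obtain ⟨m, ⟨hmp, hmd⟩, hm0, hmb⟩ := hM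
  set a := Multiset.card L with ha
  set b := Multiset.card M with hb
  obtain ⟨ls, hls⟩ : ∃ ls, l = ls ++ [a] := List.getLast?_eq_some_iff.mp hla
  obtain ⟨mt, rfl⟩ : ∃ mt, m = 0 :: mt := by
    cases m with
    | nil => simp at hm0
    | cons x t => simp at hm0; subst hm0; exact ⟨t, rfl⟩
  set mt' := mt.map (· + a) with hmt'
  have hshift : (0 :: mt).map (· + a) = a :: mt' := by simp [hmt']
  set r := ls ++ a :: mt' with hr
  have hru : r = l ++ mt' := by rw [hr, hls]; simp
  refine ⟨r, ⟨?_, ?_⟩, ?_, ?_⟩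
  · have h2 : (a :: mt').Perm (List.range' a (b + 1)) := hshift ▸ perm_map_add a hmp
    have h3 : mt'.Perm (List.range' (a + 1) b) := by
      refine List.Perm.cons_inv (a := a) ?_
      exact h2.trans (by rw [List.range'_succ])
    rw [hru]
    refine (hlp.append h3).trans ?_
    rw [range_append_range' (a + 1) b]
    have : Multiset.card (L + M) + 1 = a + 1 + b := by rw [Multiset.card_add]; omega
    rw [this]
  · rw [hr, linDiffs_eq, dlist_glue, ← hls, ← hshift, dlist_map_add]
    rw [← Multiset.coe_add]
    rw [show ((dlist l : Multiset ℕ) = L) from by rw [← linDiffs_eq]; exact hld,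
        show ((dlist (0 :: mt) : Multiset ℕ) = M) from by rw [← linDiffs_eq]; exact hmd]
  · rw [hru]
    cases l with
    | nil => simp at hl0
    | cons x t => simp at hl0 ⊢; omega
  · rw [Multiset.card_add, hr]
    cases mt with
    | nil =>
      have hM0 : M = 0 := by rw [← hmd]; rfl
      simp [hmt', hM0, ← ha]
    | cons m1 mt2 =>
      have hlast : (m1 :: mt2).getLast? = some b := by
        rw [show (0 :: m1 :: mt2).getLast? = (m1 :: mt2).getLast? from rfl] at hmb
        exact hmb
      obtain ⟨zs, hzs⟩ := List.getLast?_eq_some_iff.mp hlast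
      have e : mt' = (zs.map (· + a)) ++ [b + a] := by rw [hmt', hzs]; simp
      rw [e, show ls ++ a :: (zs.map (· + a) ++ [b + a])
            = (ls ++ a :: zs.map (· + a)) ++ [b + a] by simp,
          List.getLast?_concat]
      rw [← ha, ← hb]
      congr 1
      omega

lemma rep_perfect (s : ℕ) : HasPerfectLinearRealization (Multiset.replicate s 1) := by
  refine ⟨List.range (s + 1), ⟨?_, ?_⟩, ?_, ?_⟩
  · rw [Multiset.card_replicate]
  · rw [linDiffs_eq, List.range_eq_range', dlist_range',
        show s + 1 - 1 = s from rfl, Multiset.coe_replicate]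
  · rw [List.range_succ_eq_map]; rfl
  · rw [Multiset.card_replicate, List.range_succ, List.getLast?_concat]

/-- Concatenation of linear realizations. -/
theorem stmt4 (L M : Multiset ℕ) :
    (HasStandardLinearRealization L → HasStandardLinearRealization M →
      HasLinearRealization (L + M)) ∧
    (HasStandardLinearRealization L → HasPerfectLinearRealization M →
      HasStandardLinearRealization (L + M)) ∧
    (HasPerfectLinearRealization L → HasPerfectLinearRealization M →
      HasPerfectLinearRealization (L + M)) ∧
    (HasStandardLinearRealization L → ∀ s : ℕ,
      HasStandardLinearRealization (L + Multiset.replicate s 1)) ∧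
    (HasPerfectLinearRealization L → ∀ s : ℕ,
      HasPerfectLinearRealization (L + Multiset.replicate s 1)) := by
  exact ⟨step1, step2, step3, fun hL s => step2 hL (rep_perfect s),
    fun hL s => step3 hL (rep_perfect s)⟩
end

section
/- Let x, y, a, b, c be integers with 1 < x < y, a ≥ 0, b ≥ 0 and c > 0. If the multiset L = {1^a, x^b, y^c} has a linear realization, then a + b ≥ y − 1. -/
lemma aux_changes_bound (m : List ℕ) :
    m.toFinset.card ≤ (List.zipWith (fun a b => if a = b then (0:ℕ) else 1) m m.tail).sum + 1 := by
  induction m with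
  | nil => simp
  | cons a t ih =>
    cases t with
    | nil => simp
    | cons b t' =>
      simp only [List.toFinset_cons, List.tail_cons, List.zipWith_cons_cons, List.sum_cons] at *
      by_cases hab : a = b
      · subst hab
        simp only [if_pos rfl, Finset.insert_idem]
        omega
      · rw [if_neg hab]
        have := Finset.card_insert_le a (insert b t'.toFinset)
        omega

lemma aux_mod_iff (y u w : ℕ) : (u % y = w % y) ↔ y ∣ ((u - w) + (w - u)) := by
  rcases le_total u w with h | h
  · rw [show (u - w) + (w - u) = w - u by omega]
    exact ⟨fun hm => (Nat.modEq_iff_dvd' h).1 hm, fun hd => (Nat.modEq_iff_dvd' h).2 hd⟩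
  · rw [show (u - w) + (w - u) = u - w by omega]
    exact ⟨fun hm => (Nat.modEq_iff_dvd' h).1 hm.symm,
      fun hd => ((Nat.modEq_iff_dvd' h).2 hd).symm⟩

lemma aux_sum_indicator (y : ℕ) (ds : List ℕ) :
    (ds.map (fun t => if y ∣ t then (0:ℕ) else 1)).sum
      = Multiset.card (Multiset.filter (fun t => ¬ y ∣ t) (↑ds : Multiset ℕ)) := by
  induction ds with
  | nil => simp
  | cons d t ih =>
    by_cases hd : y ∣ d <;>
      simp [hd, ih, Multiset.filter_cons] <;> omega

lemma aux_mem_zipWith {f : ℕ → ℕ → ℕ} :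
    ∀ {l l' : List ℕ} {a : ℕ}, a ∈ List.zipWith f l l' →
      ∃ u ∈ l, ∃ w ∈ l', f u w = a := by
  intro l
  induction l with
  | nil => simp
  | cons u t ih =>
    intro l' a ha
    cases l' with
    | nil => simp at ha
    | cons w t' =>
      rw [List.zipWith_cons_cons, List.mem_cons] at ha
      rcases ha with rfl | ha
      · exact ⟨u, by simp, w, by simp, rfl⟩
      · obtain ⟨u', hu', w', hw', h⟩ := ih ha
        exact ⟨u', by simp [hu'], w', by simp [hw'], h⟩

lemma aux_card_filter_replicate (p : ℕ → Prop) [DecidablePred p] (n a : ℕ) :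
    Multiset.card (Multiset.filter p (Multiset.replicate n a)) = if p a then n else 0 := by
  induction n with
  | zero => simp
  | succ n ih =>
    by_cases hp : p a <;> simp [Multiset.replicate_succ, Multiset.filter_cons, hp, ih]

/-- If `1 < x < y`, `c > 0` and `{1^a, x^b, y^c}` has a linear
realization, then `a + b ≥ y - 1`. -/
theorem stmt5 (x y a b c : ℕ) (hx : 1 < x) (hxy : x < y) (hc : 0 < c)
    (h : HasLinearRealization (mset3 a b c x y)) :
    y - 1 ≤ a + b := by
  obtain ⟨l, hperm, hdiff⟩ := h
  set L := mset3 a b c x y with hL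
  set v := Multiset.card L + 1 with hv
  -- every element of l is < v
  have hmem : ∀ u ∈ l, u < v := by
    intro u hu
    have := hperm.mem_iff.1 hu
    simpa [List.mem_range] using this
  -- y < v
  have hyv : y < v := by
    have hyL : y ∈ L := by
      simp [hL, mset3, Multiset.mem_replicate]
      omega
    rw [← hdiff] at hyL
    simp only [linDiffs, Multiset.mem_coe] at hyL
    obtain ⟨u, hu, w, hw, huw⟩ := aux_mem_zipWith hyL
    have h1 := hmem u hu
    have h2 := hmem w (List.tail_subset l hw)
    omega
  have hy0 : 0 < y := by omega
  -- the residues mod y of l cover exactly range y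
  have htf : (l.map (· % y)).toFinset = Finset.range y := by
    ext i
    simp only [List.mem_toFinset, List.mem_map, Finset.mem_range]
    constructor
    · rintro ⟨u, _, rfl⟩
      exact Nat.mod_lt u hy0
    · intro hi
      refine ⟨i, ?_, Nat.mod_eq_of_lt hi⟩
      rw [hperm.mem_iff, List.mem_range]
      omega
  -- change-count bound
  have hbound := aux_changes_bound (l.map (· % y))
  rw [htf, Finset.card_range] at hbound
  -- rewrite the zipWith over the mapped list
  rw [show (l.map (· % y)).tail = l.tail.map (· % y) from List.map_tail.symm,
    List.zipWith_map] at hbound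
  have hfun : (fun u w : ℕ => if u % y = w % y then (0:ℕ) else 1)
      = fun u w => if y ∣ ((u - w) + (w - u)) then (0:ℕ) else 1 := by
    funext u w
    exact if_congr (aux_mod_iff y u w) rfl rfl
  rw [hfun] at hbound
  have hsum : (List.zipWith (fun u w : ℕ => if y ∣ ((u - w) + (w - u)) then (0:ℕ) else 1)
      l l.tail).sum = Multiset.card (Multiset.filter (fun t => ¬ y ∣ t) L) := by
    rw [show List.zipWith (fun u w : ℕ => if y ∣ ((u - w) + (w - u)) then (0:ℕ) else 1) l l.tail
        = (List.zipWith (fun u w : ℕ => (u - w) + (w - u)) l l.tail).map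
            (fun t => if y ∣ t then (0:ℕ) else 1) from
      by rw [List.map_zipWith]]
    rw [aux_sum_indicator]
    congr 1
    rw [← hdiff]
    rfl
  rw [hsum] at hbound
  -- compute the filter cardinality
  have hndvd1 : ¬ y ∣ 1 := by
    intro hd
    have := Nat.le_of_dvd one_pos hd
    omega
  have hndvdx : ¬ y ∣ x := by
    intro hd
    have := Nat.le_of_dvd (by omega) hd
    omega
  have hcard : Multiset.card (Multiset.filter (fun t => ¬ y ∣ t) L) = a + b := by
    simp [hL, mset3, Multiset.filter_add, aux_card_filter_replicate, hndvd1, hndvdx]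
  rw [hcard] at hbound
  omega
end

section
/- Let x ≥ 2 and, for i ∈ {1,2}, let L_i = {1^{a_i}, x^{b_i}} be a multiset of size v_i = a_i + b_i + 1. Set a = a_1 + a_2, b = b_1 + b_2 and y = a + b + 1. Suppose L_1 has a perfect linear realization and L_2 has a standard linear realization. Let c ≥ 0 and v = a + b + c + 1. If either v_1 is even and v ≡ v_1 (mod y), or v_1 is odd and v ≡ v_2 + 1 (mod y), then the multiset {1^a, x^b, y^c} has a standard linear realization. -/
namespace S7

def dd (a b : ℕ) : ℕ := (a - b) + (b - a)

lemma dd_comm (a b : ℕ) : dd a b = dd b a := by simp [dd]; omega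
lemma dd_zero_left (b : ℕ) : dd 0 b = b := by simp [dd]
lemma dd_add_right (a b k : ℕ) : dd (a + k) (b + k) = dd a b := by simp [dd]; omega
lemma dd_sub (y a b : ℕ) (ha : a ≤ y) (hb : b ≤ y) : dd (y - a) (y - b) = dd a b := by
  simp [dd]; omega

lemma linDiffs_nil : linDiffs [] = 0 := rfl
lemma linDiffs_single (a : ℕ) : linDiffs [a] = 0 := rfl
lemma linDiffs_cons_cons (a b : ℕ) (t : List ℕ) :
    linDiffs (a :: b :: t) = dd a b ::ₘ linDiffs (b :: t) := rfl

lemma linDiffs_append (l₁ l₂ : List ℕ) (h₁ : l₁ ≠ []) (h₂ : l₂ ≠ []) :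
    linDiffs (l₁ ++ l₂) =
      {dd (l₁.getLast h₁) (l₂.head h₂)} + linDiffs l₁ + linDiffs l₂ := by
  induction l₁ with
  | nil => simp at h₁
  | cons a t ih =>
    cases t with
    | nil =>
      cases l₂ with
      | nil => simp at h₂
      | cons b t₂ =>
        show linDiffs (a :: b :: t₂) = _
        rw [linDiffs_cons_cons]
        simp [linDiffs_single, Multiset.singleton_add]
    | cons a' t' =>
      have h3 : ((a :: a' :: t') ++ l₂) = a :: a' :: (t' ++ l₂) := rfl
      have h4 : (a' :: t') ++ l₂ = a' :: (t' ++ l₂) := rfl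
      have h5 : (a :: a' :: t').getLast h₁ = (a' :: t').getLast (by simp) := rfl
      rw [h3, linDiffs_cons_cons, ← h4, ih (by simp), linDiffs_cons_cons, h5]
      simp only [← Multiset.singleton_add]
      abel


lemma linDiffs_map_congr (f : ℕ → ℕ) (l : List ℕ)
    (hf : ∀ a ∈ l, ∀ b ∈ l, dd (f a) (f b) = dd a b) :
    linDiffs (l.map f) = linDiffs l := by
  induction l with
  | nil => rfl
  | cons a t ih =>
    cases t with
    | nil => rfl
    | cons b t' =>
      have : (a :: b :: t').map f = f a :: f b :: (t'.map f) := rfl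
      rw [this, linDiffs_cons_cons, linDiffs_cons_cons]
      have h1 : (b :: t').map f = f b :: t'.map f := rfl
      rw [← h1, ih (fun x hx y hy => hf x (List.mem_cons_of_mem _ hx) y (List.mem_cons_of_mem _ hy))]
      rw [hf a (by simp) b (by simp)]

lemma linDiffs_map_add (k : ℕ) (l : List ℕ) :
    linDiffs (l.map (· + k)) = linDiffs l :=
  linDiffs_map_congr _ _ (fun a _ b _ => dd_add_right a b k)

lemma linDiffs_map_sub (y : ℕ) (l : List ℕ) (hl : ∀ z ∈ l, z ≤ y) :
    linDiffs (l.map (fun z => y - z)) = linDiffs l :=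
  linDiffs_map_congr _ _ (fun a ha b hb => dd_sub y a b (hl a ha) (hl b hb))

lemma linDiffs_concat (l : List ℕ) (a : ℕ) (h : l ≠ []) :
    linDiffs (l ++ [a]) = dd (l.getLast h) a ::ₘ linDiffs l := by
  rw [linDiffs_append l [a] h (by simp), linDiffs_single]
  simp [Multiset.singleton_add]

lemma linDiffs_reverse (l : List ℕ) : linDiffs l.reverse = linDiffs l := by
  induction l with
  | nil => rfl
  | cons a t ih =>
    cases t with
    | nil => rfl
    | cons b t' =>
      have h1 : (a :: b :: t').reverse = (b :: t').reverse ++ [a] := by simp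
      have h2 : (b :: t').reverse ≠ [] := by simp
      rw [h1, linDiffs_concat _ _ h2, ih, linDiffs_cons_cons]
      congr 1
      rw [List.getLast_reverse]
      exact dd_comm _ _

def colL (y H u : ℕ) : List ℕ := (List.range H).map (fun k => u + k * y)

lemma colL_succ (y H u : ℕ) : colL y (H+1) u = u :: (colL y H u).map (· + y) := by
  unfold colL
  rw [List.range_succ_eq_map]
  simp only [List.map_cons, List.map_map, Nat.zero_mul, Nat.add_zero]
  congr 1
  apply List.map_congr_left
  intro k _
  simp [Function.comp, Nat.succ_mul]
  ring

lemma colL_ne_nil (y H u : ℕ) (hH : 1 ≤ H) : colL y H u ≠ [] := by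
  obtain ⟨H', rfl⟩ : ∃ H', H = H' + 1 := ⟨H - 1, by omega⟩
  rw [colL_succ]; simp

lemma colL_head? (y H u : ℕ) (hH : 1 ≤ H) : (colL y H u).head? = some u := by
  obtain ⟨H', rfl⟩ : ∃ H', H = H' + 1 := ⟨H - 1, by omega⟩
  rw [colL_succ]; rfl

lemma colL_getLast? (y H u : ℕ) (hH : 1 ≤ H) :
    (colL y H u).getLast? = some (u + (H-1) * y) := by
  unfold colL
  rw [List.getLast?_map]
  have : (List.range H).getLast? = some (H - 1) := by
    obtain ⟨H', rfl⟩ : ∃ H', H = H' + 1 := ⟨H - 1, by omega⟩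
    rw [List.range_succ]
    simp
  rw [this]
  rfl

lemma linDiffs_cons_head (a b : ℕ) (l : List ℕ) (h : l.head? = some b) :
    linDiffs (a :: l) = dd a b ::ₘ linDiffs l := by
  cases l with
  | nil => simp at h
  | cons c t => simp at h; subst h; exact linDiffs_cons_cons a c t

lemma linDiffs_colL (y H u : ℕ) : linDiffs (colL y H u) = Multiset.replicate (H-1) y := by
  induction H generalizing u with
  | zero => rfl
  | succ H ih =>
    rw [colL_succ]
    cases H with
    | zero => rfl
    | succ H' =>
      have hh : ((colL y (H'+1) u).map (· + y)).head? = some (u + y) := by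
        rw [List.head?_map, colL_head? y _ u (by omega)]; rfl
      rw [linDiffs_cons_head u (u+y) _ hh, linDiffs_map_add, ih u]
      have : dd u (u + y) = y := by simp [dd]
      rw [this]
      simp [Multiset.replicate_succ]

def snakeC (y H : ℕ) : Bool → List ℕ → List ℕ
  | _, [] => []
  | d, u :: cs => (if d then colL y H u else (colL y H u).reverse) ++ snakeC y H (!d) cs

lemma getLast_of_getLast? {l : List ℕ} {v : ℕ} (h : l ≠ []) (hv : l.getLast? = some v) :
    l.getLast h = v := by
  rw [List.getLast?_eq_getLast h] at hv
  exact (Option.some_inj.mp hv)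

lemma head_of_head? {l : List ℕ} {v : ℕ} (h : l ≠ []) (hv : l.head? = some v) :
    l.head h = v := by
  rw [List.head?_eq_head h] at hv
  exact (Option.some_inj.mp hv)

lemma snakeC_ne_nil (y H : ℕ) (hH : 1 ≤ H) (d : Bool) (u : ℕ) (cs : List ℕ) :
    snakeC y H d (u :: cs) ≠ [] := by
  show ((if d then colL y H u else (colL y H u).reverse) ++ snakeC y H (!d) cs) ≠ []
  cases d <;> simp [colL_ne_nil y H u hH]

lemma snakeC_head? (y H : ℕ) (hH : 1 ≤ H) (d : Bool) (u : ℕ) (cs : List ℕ) :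
    (snakeC y H d (u :: cs)).head? = some (if d then u else u + (H-1)*y) := by
  show ((if d then colL y H u else (colL y H u).reverse) ++ snakeC y H (!d) cs).head? = _
  cases d with
  | true =>
    simp only [if_true]
    rw [List.head?_append_of_ne_nil _ (colL_ne_nil y H u hH)]
    exact colL_head? y H u hH
  | false =>
    simp only [if_false, Bool.false_eq_true]
    rw [List.head?_append_of_ne_nil _ (by simpa using colL_ne_nil y H u hH)]
    rw [List.head?_reverse]
    exact colL_getLast? y H u hH

lemma snakeC_getLast? (y H : ℕ) (hH : 1 ≤ H) :
    ∀ (cs : List ℕ) (d : Bool) (h : cs ≠ []),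
    (snakeC y H d cs).getLast? =
      some (if (if Even cs.length then !d else d) = true
            then cs.getLast h + (H-1)*y else cs.getLast h) := by
  intro cs
  induction cs with
  | nil => intro d h; simp at h
  | cons u t ih =>
    intro d h
    cases t with
    | nil =>
      show ((if d then colL y H u else (colL y H u).reverse) ++ snakeC y H (!d) []).getLast? = _
      have : snakeC y H (!d) [] = [] := rfl
      rw [this, List.append_nil]
      simp only [List.length_cons, List.length_nil]
      norm_num
      cases d with
      | true => simpa using colL_getLast? y H u hH
      | false => simp [List.getLast?_reverse, colL_head? y H u hH]
    | cons u' t' =>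
      show ((if d then colL y H u else (colL y H u).reverse) ++ snakeC y H (!d) (u'::t')).getLast? = _
      rw [List.getLast?_append_of_ne_nil _ (snakeC_ne_nil y H hH (!d) u' t')]
      rw [ih (!d) (by simp)]
      congr 1
      have hlast : (u :: u' :: t').getLast h = (u' :: t').getLast (by simp) := rfl
      rw [hlast]
      simp only [List.length_cons]
      rcases Nat.even_or_odd t'.length with he | ho
      · have h1 : ¬ Even (t'.length + 1) := by simp [Nat.even_add_one, he]
        have h2 : Even (t'.length + 1 + 1) := by simp [Nat.even_add_one, h1]
        cases d <;> simp [h1, h2]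
      · have h1 : Even (t'.length + 1) := by
          simp [Nat.even_add_one, Nat.not_even_iff_odd, ho]
        have h2 : ¬ Even (t'.length + 1 + 1) := by simp [Nat.even_add_one, h1]
        cases d <;> simp [h1, h2]

lemma snakeC_coe (y H : ℕ) : ∀ (cs : List ℕ) (d : Bool),
    (↑(snakeC y H d cs) : Multiset ℕ) = (↑cs : Multiset ℕ).bind (fun u => ↑(colL y H u)) := by
  intro cs
  induction cs with
  | nil => intro d; rfl
  | cons u t ih =>
    intro d
    show (↑((if d then colL y H u else (colL y H u).reverse) ++ snakeC y H (!d) t) : Multiset ℕ) = _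
    rw [← Multiset.coe_add]
    have hcd : (↑(if d then colL y H u else (colL y H u).reverse) : Multiset ℕ) = ↑(colL y H u) := by
      cases d <;> simp [Multiset.coe_reverse]
    rw [hcd, ih (!d)]
    have : (↑(u :: t) : Multiset ℕ) = u ::ₘ ↑t := rfl
    rw [this, Multiset.cons_bind]

lemma snakeC_linDiffs (y H : ℕ) (hH : 1 ≤ H) : ∀ (cs : List ℕ) (d : Bool),
    linDiffs (snakeC y H d cs) =
      Multiset.replicate (cs.length * (H-1)) y + linDiffs cs := by
  intro cs
  induction cs with
  | nil => intro d; simp [linDiffs_nil]; rfl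
  | cons u t ih =>
    intro d
    cases t with
    | nil =>
      show linDiffs ((if d then colL y H u else (colL y H u).reverse) ++ snakeC y H (!d) []) = _
      have : snakeC y H (!d) [] = [] := rfl
      rw [this, List.append_nil]
      have hcd : linDiffs (if d then colL y H u else (colL y H u).reverse)
          = Multiset.replicate (H-1) y := by
        cases d <;> simp [linDiffs_reverse, linDiffs_colL]
      rw [hcd]
      simp [linDiffs_single]
    | cons u' t' =>
      show linDiffs ((if d then colL y H u else (colL y H u).reverse) ++ snakeC y H (!d) (u'::t')) = _
      have hc1 : (if d then colL y H u else (colL y H u).reverse) ≠ [] := by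
        cases d <;> simp [colL_ne_nil y H u hH]
      have hc2 := snakeC_ne_nil y H hH (!d) u' t'
      rw [linDiffs_append _ _ hc1 hc2]
      have hjunc : dd ((if d then colL y H u else (colL y H u).reverse).getLast hc1)
          ((snakeC y H (!d) (u'::t')).head hc2) = dd u u' := by
        have hl : (if d then colL y H u else (colL y H u).reverse).getLast hc1
            = if d then u + (H-1)*y else u := by
          apply getLast_of_getLast?
          cases d with
          | true => simpa using colL_getLast? y H u hH
          | false => simpa [List.getLast?_reverse] using colL_head? y H u hH
        have hr : (snakeC y H (!d) (u'::t')).head hc2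
            = if (!d) = true then u' else u' + (H-1)*y := by
          apply head_of_head?
          exact snakeC_head? y H hH (!d) u' t'
        rw [hl, hr]
        cases d with
        | true => simpa using dd_add_right u u' ((H-1)*y)
        | false => simp
      rw [hjunc]
      have hcd : linDiffs (if d then colL y H u else (colL y H u).reverse)
          = Multiset.replicate (H-1) y := by
        cases d <;> simp [linDiffs_reverse, linDiffs_colL]
      rw [hcd, ih (!d)]
      have hld : linDiffs (u :: u' :: t') = dd u u' ::ₘ linDiffs (u' :: t') :=
        linDiffs_cons_cons u u' t'
      rw [hld]
      simp only [List.length_cons, ← Multiset.singleton_add]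
      have hmm : (t'.length + 1 + 1) * (H-1) = (t'.length+1)*(H-1) + (H-1) := by ring
      rw [hmm, Multiset.replicate_add]
      abel

lemma ranges0 (s y : ℕ) (hs : s ≤ y) :
    ((↑(List.range y) : Multiset ℕ).bind (fun u => if u < s then ({u} : Multiset ℕ) else 0))
      = ↑(List.range s) := by
  induction y generalizing s with
  | zero =>
    have : s = 0 := by omega
    subst this; rfl
  | succ y ih =>
    rw [List.range_succ, ← Multiset.coe_add, Multiset.add_bind]
    have hone : ((↑([y]) : Multiset ℕ).bind (fun u => if u < s then ({u} : Multiset ℕ) else 0))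
        = if y < s then ({y} : Multiset ℕ) else 0 := by
      have : (↑([y]) : Multiset ℕ) = {y} := rfl
      rw [this, Multiset.singleton_bind]
    rw [hone]
    by_cases hcase : s ≤ y
    · rw [ih s hcase]
      have : ¬ (y < s) := by omega
      simp [this]
    · have hsy : s = y + 1 := by omega
      subst hsy
      have h1 : ((↑(List.range y) : Multiset ℕ).bind
          (fun u => if u < y + 1 then ({u} : Multiset ℕ) else 0))
          = ((↑(List.range y) : Multiset ℕ).bind (fun u => if u < y then ({u} : Multiset ℕ) else 0)) := by
        apply Multiset.bind_congr
        intro a ha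
        have : a < y := by simpa using ha
        simp [this, Nat.lt_succ_of_lt this]
      rw [h1, ih y le_rfl]
      have h6 : (if y < y + 1 then ({y} : Multiset ℕ) else 0) = (↑([y]) : Multiset ℕ) := by simp
      rw [h6, Multiset.coe_add, ← List.range_succ]

lemma ranges (y q s : ℕ) (hs : s ≤ y) :
    ((↑(List.range y) : Multiset ℕ).bind
      (fun u => ↑(colL y (q + if u < s then 1 else 0) u)))
      = (↑(List.range (q * y + s)) : Multiset ℕ) := by
  induction q with
  | zero =>
    have h0 : ((↑(List.range y) : Multiset ℕ).bind
        (fun u => ↑(colL y (0 + if u < s then 1 else 0) u)))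
        = ((↑(List.range y) : Multiset ℕ).bind (fun u => if u < s then ({u} : Multiset ℕ) else 0)) := by
      apply Multiset.bind_congr
      intro a _
      by_cases h : a < s <;> simp [h, colL, (by decide : List.range 1 = [0])]
    rw [h0, ranges0 s y hs]
    norm_num
  | succ q ih =>
    have hstep : ∀ u : ℕ, (↑(colL y (q + 1 + if u < s then 1 else 0) u) : Multiset ℕ)
        = {u} + (↑(colL y (q + if u < s then 1 else 0) u) : Multiset ℕ).map (· + y) := by
      intro u
      have : q + 1 + (if u < s then 1 else 0) = (q + if u < s then 1 else 0) + 1 := by ring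
      rw [this, colL_succ]
      have : (↑(u :: (colL y (q + if u < s then 1 else 0) u).map (· + y)) : Multiset ℕ)
          = {u} + ↑((colL y (q + if u < s then 1 else 0) u).map (· + y)) := by
        simp [Multiset.singleton_add]
      rw [this, Multiset.map_coe]
    rw [Multiset.bind_congr (fun u _ => hstep u), Multiset.bind_add]
    have h2 : ((↑(List.range y) : Multiset ℕ).bind (fun u => ({u} : Multiset ℕ)))
        = ↑(List.range y) := by
      have := Multiset.bind_singleton (↑(List.range y) : Multiset ℕ) id
      simpa using this
    have h3 : ((↑(List.range y) : Multiset ℕ).bind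
        (fun u => (↑(colL y (q + if u < s then 1 else 0) u) : Multiset ℕ).map (· + y)))
        = (↑(List.range (q * y + s)) : Multiset ℕ).map (· + y) := by
      rw [← Multiset.map_bind, ih]
    rw [h2, h3]
    have h4 : (q + 1) * y + s = y + (q * y + s) := by ring
    rw [h4]
    rw [List.range_add (n := y) (m := q * y + s)]
    rw [← Multiset.coe_add, Multiset.map_coe]
    congr 1
    apply congrArg
    apply List.map_congr_left
    intro a _
    omega

lemma rev_range (n : ℕ) :
    (↑(List.range n) : Multiset ℕ).map (fun z => n - 1 - z) = ↑(List.range n) := by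
  induction n with
  | zero => rfl
  | succ n ih =>
    rw [List.range_succ, ← Multiset.coe_add, Multiset.map_add]
    have h1 : (↑([n]) : Multiset ℕ).map (fun z => n + 1 - 1 - z) = {0} := by simp
    have h2 : (↑(List.range n) : Multiset ℕ).map (fun z => n + 1 - 1 - z)
        = (↑(List.range n) : Multiset ℕ).map ((· + 1) ∘ (fun z => n - 1 - z)) := by
      apply Multiset.map_congr rfl
      intro a ha
      have : a < n := by simpa using ha
      simp [Function.comp]
      omega
    rw [h1, h2, ← Multiset.map_map, ih]
    have h3 : (↑(List.range (n+1)) : Multiset ℕ) = {0} + (↑(List.range n) : Multiset ℕ).map (· + 1) := by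
      rw [List.range_succ_eq_map]
      have h5 : (↑((0 : ℕ) :: (List.range n).map Nat.succ) : Multiset ℕ)
          = {0} + ↑((List.range n).map Nat.succ) := by simp [Multiset.singleton_add]
      rw [h5, Multiset.map_coe]
      try rfl
    have h4 : (↑(List.range n) : Multiset ℕ) + (↑([n]) : Multiset ℕ)
        = {0} + (↑(List.range n) : Multiset ℕ).map (· + 1) := by
      rw [Multiset.coe_add, ← List.range_succ, h3]
    rw [h4]
    abel

lemma assemble (L : Multiset ℕ) (w : List ℕ)
    (hperm : (↑w : Multiset ℕ) = (↑(List.range (Multiset.card L + 1)) : Multiset ℕ))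
    (hdiff : linDiffs w = L) (hhead : w.head? = some 0) :
    HasStandardLinearRealization L :=
  ⟨w, ⟨Multiset.coe_eq_coe.mp hperm, hdiff⟩, hhead⟩

lemma card_mset3 (a b c x y : ℕ) : Multiset.card (mset3 a b c x y) = a + b + c := by
  simp [mset3]

lemma rev_range' (n : ℕ) :
    (↑(List.range n) : Multiset ℕ).map (fun z => n - z)
      = (↑(List.range n) : Multiset ℕ).map (· + 1) := by
  have h1 : (↑(List.range n) : Multiset ℕ).map (fun z => n - z)
      = (↑(List.range n) : Multiset ℕ).map ((· + 1) ∘ (fun z => n - 1 - z)) := by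
    apply Multiset.map_congr rfl
    intro a ha
    have : a < n := by simpa using ha
    simp [Function.comp]
    omega
  rw [h1, ← Multiset.map_map, rev_range]

lemma arith_lin (A y c v : ℕ) (hv : v = y + c) (h1 : A + y = v) : A = c := by omega

lemma mset3_expand (a₁ b₁ a₂ b₂ c x y : ℕ) :
    mset3 (a₁+a₂) (b₁+b₂) c x y =
      (Multiset.replicate a₁ 1 + Multiset.replicate b₁ x) +
      (Multiset.replicate a₂ 1 + Multiset.replicate b₂ x) +
      Multiset.replicate c y := by
  simp [mset3, Multiset.replicate_add]
  abel

lemma evenCase (x a₁ b₁ a₂ b₂ c : ℕ)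
    (g h : List ℕ)
    (hgperm : (↑g : Multiset ℕ) = (↑(List.range (a₁+b₁+1)) : Multiset ℕ))
    (hgdiff : linDiffs g = Multiset.replicate a₁ 1 + Multiset.replicate b₁ x)
    (hghead : g.head? = some 0) (hglast : g.getLast? = some (a₁+b₁))
    (hhperm : (↑h : Multiset ℕ) = (↑(List.range (a₂+b₂+1)) : Multiset ℕ))
    (hhdiff : linDiffs h = Multiset.replicate a₂ 1 + Multiset.replicate b₂ x)
    (hhhead : h.head? = some 0)
    (heven : Even (a₁+b₁+1))
    (hmod : (a₁+a₂+b₁+b₂+c+1) % (a₁+a₂+b₁+b₂+1) = (a₁+b₁+1) % (a₁+a₂+b₁+b₂+1)) :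
    HasStandardLinearRealization (mset3 (a₁+a₂) (b₁+b₂) c x (a₁+a₂+b₁+b₂+1)) := by
  set v₁ : ℕ := a₁+b₁+1 with hv₁
  set v₂ : ℕ := a₂+b₂+1 with hv₂
  set y : ℕ := a₁+a₂+b₁+b₂+1 with hy
  set v : ℕ := a₁+a₂+b₁+b₂+c+1 with hv
  set q : ℕ := v / y with hqdef
  obtain ⟨t, hqt⟩ : ∃ t, q = t + 1 := by
    refine ⟨q - 1, ?_⟩
    have : 1 ≤ q := by
      rw [hqdef]
      exact (Nat.one_le_div_iff (by omega)).mpr (by omega)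
    omega
  have hvy : v = y + c := by omega
  have hdm : y * q + v % y = v := Nat.div_add_mod v y
  have hglen : g.length = v₁ := by
    have := (Multiset.coe_eq_coe.mp hgperm).length_eq
    simpa using this
  have hhlen : h.length = v₂ := by
    have := (Multiset.coe_eq_coe.mp hhperm).length_eq
    simpa using this
  obtain ⟨gt, hgt⟩ : ∃ gt, g = 0 :: gt := by
    cases g with
    | nil => simp at hghead
    | cons g0 t0 =>
      have : g0 = 0 := by simpa using hghead
      exact ⟨t0, by rw [this]⟩
  obtain ⟨ht, hht⟩ : ∃ ht, h = 0 :: ht := by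
    cases h with
    | nil => simp at hhhead
    | cons h0 t0 =>
      have : h0 = 0 := by simpa using hhhead
      exact ⟨t0, by rw [this]⟩
  subst hht
  by_cases hv2 : v₂ = 1
  · -- v₂ = 1 : h = [0], y = v₁
    have ha₂ : a₂ = 0 := by omega
    have hb₂ : b₂ = 0 := by omega
    have hyv₁ : y = v₁ := by omega
    have hs0 : v % y = 0 := by
      rw [hmod, hyv₁]
      exact Nat.mod_self v₁
    have hqy : q * y + 0 = v := by
      rw [mul_comm, ← hs0]
      exact hdm
    apply assemble _ (snakeC y q true g)
    · rw [card_mset3]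
      have hcard : a₁ + a₂ + (b₁ + b₂) + c + 1 = v := by omega
      rw [hcard, snakeC_coe, hgperm]
      have hcongr : ((↑(List.range v₁) : Multiset ℕ).bind (fun u => ↑(colL y q u)))
          = ((↑(List.range y) : Multiset ℕ).bind
              (fun u => (↑(colL y (q + if u < v % y then 1 else 0) u) : Multiset ℕ))) := by
        rw [← hyv₁]
        apply Multiset.bind_congr
        intro u _
        rw [hs0]
        simp
      rw [hcongr, ranges y q (v % y) (le_of_lt (Nat.mod_lt v (by omega))), hs0, hqy]
    · rw [snakeC_linDiffs y q (by omega) g true, hglen, hgdiff]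
      have hcy : v₁ * (q - 1) = c := by
        apply arith_lin _ y _ v hvy
        have h2 : v₁ * (q - 1) + y = y * q := by
          rw [hqt, hyv₁]
          simp [Nat.add_sub_cancel]
          ring
        rw [h2]
        omega
      rw [hcy, mset3_expand, ha₂, hb₂]
      simp [Multiset.replicate_zero]
      abel
    · rw [hgt, snakeC_head? y q (by omega) true 0 gt]
      simp
  · -- v₂ ≥ 2
    have hv₂2 : 2 ≤ v₂ := by omega
    have hs : v % y = v₁ := by
      rw [hmod]
      exact Nat.mod_eq_of_lt (by omega)
    have hqy : q * y + v₁ = v := by rw [mul_comm, ← hs]; exact hdm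
    have hthlen : ht.length = a₂ + b₂ := by
      have : (0 :: ht).length = v₂ := hhlen
      simp at this
      omega
    obtain ⟨hth, ht', hht'⟩ : ∃ w t', ht = w :: t' := by
      cases ht with
      | nil => simp at hthlen; omega
      | cons w t' => exact ⟨w, t', rfl⟩
    have hhtco : (↑ht : Multiset ℕ) = (↑(List.range (a₂+b₂)) : Multiset ℕ).map (· + 1) := by
      have h1 : (↑(0 :: ht) : Multiset ℕ) = (0 : ℕ) ::ₘ ↑ht := by rfl
      have h2 : (↑(List.range v₂) : Multiset ℕ) = (0 : ℕ) ::ₘ ((↑(List.range (a₂+b₂)) : Multiset ℕ).map (· + 1)) := by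
        rw [hv₂, List.range_succ_eq_map]
        rw [Multiset.map_coe]
        rfl
      have h3 := hhperm
      rw [h1, h2] at h3
      exact (Multiset.cons_inj_right 0).mp h3
    set D : List ℕ := ht.map (· + (a₁+b₁)) with hD
    have hDne : D ≠ [] := by rw [hD, hht']; simp
    have hDlen : D.length = a₂ + b₂ := by rw [hD]; simp [hthlen]
    have hgne : g ≠ [] := by rw [hgt]; simp
    have hs1ne : snakeC y (q+1) true g ≠ [] := by
      rw [hgt]; exact snakeC_ne_nil y (q+1) (by omega) true 0 gt
    have hs2ne : snakeC y q true D ≠ [] := by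
      rw [hD, hht']
      exact snakeC_ne_nil y q (by omega) true _ _
    apply assemble _ (snakeC y (q+1) true g ++ snakeC y q true D)
    · rw [card_mset3]
      have hcard : a₁ + a₂ + (b₁ + b₂) + c + 1 = v := by omega
      rw [hcard, ← Multiset.coe_add, snakeC_coe, snakeC_coe, hgperm]
      have hDco : (↑D : Multiset ℕ) = (↑(List.range (a₂+b₂)) : Multiset ℕ).map (fun z => v₁ + z) := by
        rw [hD, ← Multiset.map_coe, hhtco, Multiset.map_map]
        apply Multiset.map_congr rfl
        intro a _
        simp [hv₁]
        ring
      rw [hDco]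
      have hb1 : ((↑(List.range v₁) : Multiset ℕ).bind (fun u => ↑(colL y (q+1) u)))
          = ((↑(List.range v₁) : Multiset ℕ).bind
              (fun u => (↑(colL y (q + if u < v % y then 1 else 0) u) : Multiset ℕ))) := by
        apply Multiset.bind_congr
        intro u hu
        have : u < v₁ := by simpa using hu
        rw [hs]
        simp [this]
      have hb2 : (((↑(List.range (a₂+b₂)) : Multiset ℕ).map (fun z => v₁ + z)).bind
            (fun u => ↑(colL y q u)))
          = (((↑(List.range (a₂+b₂)) : Multiset ℕ).map (fun z => v₁ + z)).bind
              (fun u => (↑(colL y (q + if u < v % y then 1 else 0) u) : Multiset ℕ))) := by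
        apply Multiset.bind_congr
        intro u hu
        obtain ⟨z, hz, rfl⟩ := Multiset.mem_map.mp hu
        have : ¬ (v₁ + z < v % y) := by rw [hs]; omega
        simp [this]
      rw [hb1, hb2, ← Multiset.add_bind]
      have hsplit : (↑(List.range v₁) : Multiset ℕ)
            + (↑(List.range (a₂+b₂)) : Multiset ℕ).map (fun z => v₁ + z)
          = (↑(List.range y) : Multiset ℕ) := by
        have : y = v₁ + (a₂ + b₂) := by omega
        rw [this, List.range_add (n := v₁) (m := a₂+b₂), ← Multiset.coe_add, Multiset.map_coe]
      rw [hsplit, ranges y q (v % y) (le_of_lt (Nat.mod_lt v (by omega))), hs, hqy]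
    · rw [linDiffs_append _ _ hs1ne hs2ne]
      rw [snakeC_linDiffs y (q+1) (by omega) g true,
        snakeC_linDiffs y q (by omega) D true, hglen, hDlen, hgdiff]
      have hjunc : dd ((snakeC y (q+1) true g).getLast hs1ne)
          ((snakeC y q true D).head hs2ne) = hth := by
        have hl : (snakeC y (q+1) true g).getLast hs1ne = a₁ + b₁ := by
          apply getLast_of_getLast?
          rw [snakeC_getLast? y (q+1) (by omega) g true hgne]
          have hevenlen : Even g.length := by rw [hglen, hv₁]; exact heven
          simp [hevenlen]
          exact getLast_of_getLast? hgne hglast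
        have hr : (snakeC y q true D).head hs2ne = hth + (a₁+b₁) := by
          apply head_of_head?
          rw [hD, hht']
          have : (hth :: ht').map (· + (a₁+b₁)) = (hth + (a₁+b₁)) :: ht'.map (· + (a₁+b₁)) := rfl
          rw [this, snakeC_head? y q (by omega) true _ _]
          simp
        rw [hl, hr]
        have h6 : dd (0 + (a₁+b₁)) (hth + (a₁+b₁)) = dd 0 hth := dd_add_right 0 hth (a₁+b₁)
        rw [Nat.zero_add] at h6
        rw [h6, dd_zero_left]
      rw [hjunc]
      have hDdiff : linDiffs D = linDiffs ht := by rw [hD]; exact linDiffs_map_add _ ht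
      rw [hDdiff]
      have hLtwo : Multiset.replicate a₂ 1 + Multiset.replicate b₂ x = hth ::ₘ linDiffs ht := by
        rw [← hhdiff, hht', linDiffs_cons_cons, dd_zero_left]
      have hcy : v₁ * (q + 1 - 1) + (a₂+b₂) * (q-1) = c := by
        apply arith_lin _ y _ v hvy
        have h2 : v₁ * (q + 1 - 1) + (a₂+b₂) * (q-1) + y = y * q + v₁ := by
          rw [hqt]
          simp [Nat.add_sub_cancel]
          rw [hv₁, hy]
          ring
        rw [h2]
        omega
      rw [mset3_expand, hLtwo]
      rw [show Multiset.replicate c ((a₁+a₂+b₁+b₂+1)) = Multiset.replicate c y from rfl]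
      rw [← hcy, Multiset.replicate_add]
      simp only [← Multiset.singleton_add]
      abel
    · rw [List.head?_append_of_ne_nil _ ]
      · rw [hgt, snakeC_head? y (q+1) (by omega) true 0 gt]
        simp
      · exact hs1ne
lemma oddCase (x a₁ b₁ a₂ b₂ c : ℕ)
    (g h : List ℕ)
    (hgperm : (↑g : Multiset ℕ) = (↑(List.range (a₁+b₁+1)) : Multiset ℕ))
    (hgdiff : linDiffs g = Multiset.replicate a₁ 1 + Multiset.replicate b₁ x)
    (hghead : g.head? = some 0) (hglast : g.getLast? = some (a₁+b₁))
    (hhperm : (↑h : Multiset ℕ) = (↑(List.range (a₂+b₂+1)) : Multiset ℕ))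
    (hhdiff : linDiffs h = Multiset.replicate a₂ 1 + Multiset.replicate b₂ x)
    (hhhead : h.head? = some 0)
    (hodd : Odd (a₁+b₁+1))
    (hmod : (a₁+a₂+b₁+b₂+c+1) % (a₁+a₂+b₁+b₂+1) = (a₂+b₂+1+1) % (a₁+a₂+b₁+b₂+1)) :
    HasStandardLinearRealization (mset3 (a₁+a₂) (b₁+b₂) c x (a₁+a₂+b₁+b₂+1)) := by
  set v₁ : ℕ := a₁+b₁+1 with hv₁
  set v₂ : ℕ := a₂+b₂+1 with hv₂
  set y : ℕ := a₁+a₂+b₁+b₂+1 with hy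
  set v : ℕ := a₁+a₂+b₁+b₂+c+1 with hv
  set q : ℕ := v / y with hqdef
  obtain ⟨t, hqt⟩ : ∃ t, q = t + 1 := by
    refine ⟨q - 1, ?_⟩
    have : 1 ≤ q := by
      rw [hqdef]
      exact (Nat.one_le_div_iff (by omega)).mpr (by omega)
    omega
  have hvy : v = y + c := by omega
  have hdm : y * q + v % y = v := Nat.div_add_mod v y
  have hglen : g.length = v₁ := by
    have := (Multiset.coe_eq_coe.mp hgperm).length_eq
    simpa using this
  have hhlen : h.length = v₂ := by
    have := (Multiset.coe_eq_coe.mp hhperm).length_eq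
    simpa using this
  have hoddv₁ : v₁ % 2 = 1 := Nat.odd_iff.mp hodd
  obtain ⟨gt, hgt⟩ : ∃ gt, g = 0 :: gt := by
    cases g with
    | nil => simp at hghead
    | cons g0 t0 =>
      have : g0 = 0 := by simpa using hghead
      exact ⟨t0, by rw [this]⟩
  obtain ⟨ht, hht⟩ : ∃ ht, h = 0 :: ht := by
    cases h with
    | nil => simp at hhhead
    | cons h0 t0 =>
      have : h0 = 0 := by simpa using hhhead
      exact ⟨t0, by rw [this]⟩
  subst hht
  have hthlen : ht.length = a₂ + b₂ := by
    have : (0 :: ht).length = v₂ := hhlen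
    simp at this
    omega
  by_cases hv₁1 : v₁ = 1
  · -- v₁ = 1 : g = [0]
    have ha₁ : a₁ = 0 := by omega
    have hb₁ : b₁ = 0 := by omega
    have hyv₂ : y = v₂ := by omega
    by_cases hv₂1 : v₂ = 1
    · -- y = 1
      have ha₂ : a₂ = 0 := by omega
      have hb₂ : b₂ = 0 := by omega
      have hy1 : y = 1 := by omega
      apply assemble _ (colL 1 (c+1) 0)
      · rw [card_mset3]
        have hcard : a₁ + a₂ + (b₁ + b₂) + c + 1 = c + 1 := by omega
        rw [hcard]
        have : (↑(colL 1 (c+1) 0) : Multiset ℕ) = (↑(List.range (c+1)) : Multiset ℕ).map (fun k => 0 + k * 1) := by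
          rw [Multiset.map_coe]; rfl
        rw [this]
        have h2 : (↑(List.range (c+1)) : Multiset ℕ).map (fun k => 0 + k * 1)
            = (↑(List.range (c+1)) : Multiset ℕ).map id := by
          apply Multiset.map_congr rfl
          intro a _
          simp
        rw [h2, Multiset.map_id]
      · rw [linDiffs_colL]
        rw [mset3_expand, ha₁, hb₁, ha₂, hb₂, hy1]
        simp
      · exact colL_head? 1 (c+1) 0 (by omega)
    · -- v₁ = 1, v₂ ≥ 2
      have hv₂2 : 2 ≤ v₂ := by omega
      have hs : v % y = 1 := by
        rw [hmod, hyv₂, Nat.add_mod_left]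
        exact Nat.mod_eq_of_lt (by omega)
      have hqy : y * q + 1 = v := by rw [← hs]; exact hdm
      obtain ⟨hth, ht', hht'⟩ : ∃ w t', ht = w :: t' := by
        cases ht with
        | nil => simp at hthlen; omega
        | cons w t' => exact ⟨w, t', rfl⟩
      have hhtco : (↑ht : Multiset ℕ) = (↑(List.range (a₂+b₂)) : Multiset ℕ).map (· + 1) := by
        have h1 : (↑((0:ℕ) :: ht) : Multiset ℕ) = (0 : ℕ) ::ₘ ↑ht := by rfl
        have h2 : (↑(List.range v₂) : Multiset ℕ) = (0 : ℕ) ::ₘ ((↑(List.range (a₂+b₂)) : Multiset ℕ).map (· + 1)) := by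
          rw [hv₂, List.range_succ_eq_map, Multiset.map_coe]
          rfl
        have h3 := hhperm
        rw [h1, h2] at h3
        exact (Multiset.cons_inj_right 0).mp h3
      have hmemht : ∀ z ∈ ht, 1 ≤ z ∧ z ≤ a₂ + b₂ := by
        intro z hz
        have : z ∈ (↑ht : Multiset ℕ) := by simpa using hz
        rw [hhtco] at this
        obtain ⟨w, hw, rfl⟩ := Multiset.mem_map.mp this
        have : w < a₂ + b₂ := by simpa using hw
        omega
      set C : List ℕ := ht.map (fun z => v₂ - z) with hC
      have hCc : C = (v₂ - hth) :: ht'.map (fun z => v₂ - z) := by rw [hC, hht']; rfl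
      have hCne : C ≠ [] := by rw [hCc]; simp
      have hSCne : snakeC y q false C ≠ [] := by
        rw [hCc]; exact snakeC_ne_nil y q (by omega) false _ _
      have hAne : colL y (q+1) 0 ≠ [] := colL_ne_nil y (q+1) 0 (by omega)
      apply assemble _ (colL y (q+1) 0 ++ snakeC y q false C)
      · rw [card_mset3]
        have hcard : a₁ + a₂ + (b₁ + b₂) + c + 1 = v := by omega
        rw [hcard, ← Multiset.coe_add, snakeC_coe]
        have hA : (↑(colL y (q+1) 0) : Multiset ℕ)
            = ({0} : Multiset ℕ).bind (fun u => (↑(colL y (q + if u < v % y then 1 else 0) u) : Multiset ℕ)) := by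
          rw [Multiset.singleton_bind, hs]
          simp
        have hCco : (↑C : Multiset ℕ) = (↑(List.range (a₂+b₂)) : Multiset ℕ).map (· + 1) := by
          rw [hC, ← Multiset.map_coe, hhtco, Multiset.map_map]
          rw [← rev_range' (a₂+b₂)]
          apply Multiset.map_congr rfl
          intro a ha
          have : a < a₂ + b₂ := by simpa using ha
          simp [Function.comp]
          omega
        have hCb : ((↑C : Multiset ℕ).bind (fun u => (↑(colL y q u) : Multiset ℕ)))
            = ((↑C : Multiset ℕ).bind (fun u => (↑(colL y (q + if u < v % y then 1 else 0) u) : Multiset ℕ))) := by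
          apply Multiset.bind_congr
          intro u hu
          rw [hCco] at hu
          obtain ⟨z, hz, rfl⟩ := Multiset.mem_map.mp hu
          have : ¬ (z + 1 < v % y) := by rw [hs]; omega
          simp [this]
        rw [hA, hCb, ← Multiset.add_bind]
        have hsplit : ({0} : Multiset ℕ) + ↑C = (↑(List.range y) : Multiset ℕ) := by
          rw [hCco]
          have : y = (a₂ + b₂) + 1 := by omega
          rw [this, List.range_succ_eq_map, Multiset.map_coe]
          rfl
        rw [hsplit, ranges y q (v % y) (le_of_lt (Nat.mod_lt v (by omega))), hs]
        rw [mul_comm]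
        rw [hqy]
      · rw [linDiffs_append _ _ hAne hSCne]
        rw [linDiffs_colL, snakeC_linDiffs y q (by omega) C false]
        have hClen : C.length = a₂ + b₂ := by rw [hC]; simp [hthlen]
        have hCdiff : linDiffs C = linDiffs ht := by
          rw [hC]
          apply linDiffs_map_sub
          intro z hz
          have := hmemht z hz
          omega
        have hjunc : dd ((colL y (q+1) 0).getLast hAne) ((snakeC y q false C).head hSCne)
            = hth := by
          have hl : (colL y (q+1) 0).getLast hAne = 0 + q * y := by
            apply getLast_of_getLast?
            rw [colL_getLast? y (q+1) 0 (by omega)]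
            simp
          have hr : (snakeC y q false C).head hSCne = (v₂ - hth) + (q-1)*y := by
            apply head_of_head?
            rw [hCc, snakeC_head? y q (by omega) false _ _]
            simp
          rw [hl, hr, hqt]
          simp only [Nat.add_sub_cancel, Nat.zero_add]
          have h1 : (t+1)*y = y + t*y := by ring
          rw [h1]
          have h2 : dd (y + t*y) ((v₂ - hth) + t*y) = dd y (v₂ - hth) := dd_add_right y (v₂ - hth) (t*y)
          rw [h2]
          have hb : hth ≤ v₂ := by have := hmemht hth (by rw [hht']; simp); omega
          have h3 : dd y (v₂ - hth) = dd (v₂ - 0) (v₂ - hth) := by rw [hyv₂]; simp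
          rw [h3, dd_sub v₂ 0 hth (by omega) hb, dd_zero_left]
        rw [hjunc, hCdiff, hClen]
        have hLtwo : Multiset.replicate a₂ 1 + Multiset.replicate b₂ x = hth ::ₘ linDiffs ht := by
          rw [← hhdiff, hht', linDiffs_cons_cons, dd_zero_left]
        have hcy : (q + 1 - 1) + (a₂+b₂) * (q-1) = c := by
          apply arith_lin _ y _ v hvy
          have h2 : (q + 1 - 1) + (a₂+b₂) * (q-1) + y = y * q + 1 := by
            rw [hqt]
            simp only [Nat.add_sub_cancel]
            have hy2 : y = a₂ + b₂ + 1 := by omega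
            rw [hy2]
            ring
          rw [h2]
          omega
        rw [mset3_expand, hLtwo, ha₁, hb₁]
        rw [← hcy, Multiset.replicate_add]
        simp only [← Multiset.singleton_add, Multiset.replicate_zero]
        abel
      · rw [List.head?_append_of_ne_nil _ hAne]
        exact colL_head? y (q+1) 0 (by omega)
  · -- v₁ ≥ 3
    have hv₁3 : 3 ≤ v₁ := by omega
    have hs : v % y = a₂ + b₂ + 2 := by
      rw [hmod, hv₂]
      exact Nat.mod_eq_of_lt (by omega)
    have hqy : y * q + (a₂ + b₂ + 2) = v := by rw [← hs]; exact hdm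
    have hgtne : gt ≠ [] := by
      intro hc
      rw [hgt, hc] at hglen
      simp at hglen
      omega
    have hgl : gt.getLast hgtne = a₁ + b₁ := by
      apply getLast_of_getLast?
      have : g.getLast? = gt.getLast? := by
        rw [hgt]
        cases gt with
        | nil => exact absurd rfl hgtne
        | cons w t0 => exact List.getLast?_cons_cons
      rw [← this]
      exact hglast
    set gm : List ℕ := gt.dropLast with hgm
    have hgtdec : gt = gm ++ [a₁ + b₁] := by
      rw [hgm, ← hgl]
      exact (List.dropLast_append_getLast hgtne).symm
    have hgmlen : gm.length = a₁ + b₁ - 1 := by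
      have h1 : gt.length = v₁ - 1 := by
        rw [hgt] at hglen
        simp at hglen
        omega
      have h2 : gt.length = gm.length + 1 := by rw [hgtdec]; simp
      omega
    set m : ℕ := gm.length with hm
    have hmval : m + 1 = a₁ + b₁ := by rw [hm]; omega
    have hgmne : gm ≠ [] := by
      intro hc
      rw [hc] at hm
      simp at hm
      omega
    have hym : y = m + (a₂ + b₂) + 2 := by omega
    have hgmco : (↑gm : Multiset ℕ) = (↑(List.range m) : Multiset ℕ).map (· + 1) := by
      have h1 : (↑g : Multiset ℕ) = (0 : ℕ) ::ₘ ((↑gm : Multiset ℕ) + {a₁ + b₁}) := by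
        rw [hgt, hgtdec]
        have : ((0:ℕ) :: (gm ++ [a₁+b₁]) : Multiset ℕ) = (0:ℕ) ::ₘ (↑(gm ++ [a₁+b₁]) : Multiset ℕ) := rfl
        rw [this, ← Multiset.coe_add]
        rfl
      have h2 : (↑(List.range v₁) : Multiset ℕ)
          = (0 : ℕ) ::ₘ (((↑(List.range m) : Multiset ℕ).map (· + 1)) + {a₁ + b₁}) := by
        have hv₁m : v₁ = (m + 1) + 1 := by omega
        rw [hv₁m, List.range_succ, ← Multiset.coe_add, List.range_succ_eq_map, Multiset.map_coe]
        have : (↑([m + 1]) : Multiset ℕ) = ({a₁ + b₁} : Multiset ℕ) := by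
          rw [show m + 1 = a₁ + b₁ from hmval]
          rfl
        rw [this]
        rfl
      have h3 := hgperm
      rw [h1, h2] at h3
      have h4 := (Multiset.cons_inj_right (0:ℕ)).mp h3
      exact add_right_cancel h4
    have hmemgm : ∀ z ∈ gm, 1 ≤ z ∧ z ≤ m := by
      intro z hz
      have : z ∈ (↑gm : Multiset ℕ) := by simpa using hz
      rw [hgmco] at this
      obtain ⟨w, hw, rfl⟩ := Multiset.mem_map.mp this
      have : w < m := by simpa using hw
      omega
    obtain ⟨gmh, gm', hgm'⟩ : ∃ w t', gm = w :: t' :=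
      ⟨gm.head hgmne, gm.tail, (List.cons_head_tail hgmne).symm⟩
    set B : List ℕ := gm.map (fun z => y - z) with hB
    set C : List ℕ := ((0:ℕ) :: ht).map (fun z => v₂ - z) with hC
    have hBc : B = (y - gmh) :: gm'.map (fun z => y - z) := by rw [hB, hgm']; rfl
    have hCc : C = v₂ :: ht.map (fun z => v₂ - z) := by rw [hC]; simp
    have hBne : B ≠ [] := by rw [hBc]; simp
    have hSBne : snakeC y q false B ≠ [] := by
      rw [hBc]; exact snakeC_ne_nil y q (by omega) false _ _
    have hSCne : snakeC y (q+1) true C ≠ [] := by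
      rw [hCc]; exact snakeC_ne_nil y (q+1) (by omega) true _ _
    have hSBCne : snakeC y q false B ++ snakeC y (q+1) true C ≠ [] := by
      simp [hSBne]
    have hAne : colL y (q+1) 0 ≠ [] := colL_ne_nil y (q+1) 0 (by omega)
    apply assemble _ (colL y (q+1) 0 ++ (snakeC y q false B ++ snakeC y (q+1) true C))
    · rw [card_mset3]
      have hcard : a₁ + a₂ + (b₁ + b₂) + c + 1 = v := by omega
      rw [hcard, ← Multiset.coe_add, ← Multiset.coe_add, snakeC_coe, snakeC_coe]
      have hA : (↑(colL y (q+1) 0) : Multiset ℕ)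
          = ({0} : Multiset ℕ).bind (fun u => (↑(colL y (q + if u < v % y then 1 else 0) u) : Multiset ℕ)) := by
        rw [Multiset.singleton_bind, hs]
        simp
      have hBco : (↑B : Multiset ℕ) = (↑(List.range m) : Multiset ℕ).map (fun z => (a₂+b₂+2) + z) := by
        rw [hB, ← Multiset.map_coe, hgmco, Multiset.map_map]
        have hstep : (↑(List.range m) : Multiset ℕ).map ((fun z => y - z) ∘ (· + 1))
            = (↑(List.range m) : Multiset ℕ).map ((fun z => (a₂+b₂+2) + z) ∘ (fun z => m - 1 - z)) := by
          apply Multiset.map_congr rfl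
          intro a ha
          have : a < m := by simpa using ha
          simp [Function.comp]
          omega
        rw [hstep, ← Multiset.map_map, rev_range]
      have hCco : (↑C : Multiset ℕ) = (↑(List.range v₂) : Multiset ℕ).map (· + 1) := by
        rw [hC, ← Multiset.map_coe, hhperm, rev_range']
      have hBb : ((↑B : Multiset ℕ).bind (fun u => (↑(colL y q u) : Multiset ℕ)))
          = ((↑B : Multiset ℕ).bind (fun u => (↑(colL y (q + if u < v % y then 1 else 0) u) : Multiset ℕ))) := by
        apply Multiset.bind_congr
        intro u hu
        rw [hBco] at hu
        obtain ⟨z, hz, rfl⟩ := Multiset.mem_map.mp hu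
        have : ¬ ((a₂+b₂+2) + z < v % y) := by rw [hs]; omega
        simp [this]
      have hCb : ((↑C : Multiset ℕ).bind (fun u => (↑(colL y (q+1) u) : Multiset ℕ)))
          = ((↑C : Multiset ℕ).bind (fun u => (↑(colL y (q + if u < v % y then 1 else 0) u) : Multiset ℕ))) := by
        apply Multiset.bind_congr
        intro u hu
        rw [hCco] at hu
        obtain ⟨z, hz, rfl⟩ := Multiset.mem_map.mp hu
        have hzlt : z < v₂ := by simpa using hz
        have : z + 1 < v % y := by rw [hs]; omega
        simp [this]
      rw [hA, hBb, hCb, ← Multiset.add_bind, ← Multiset.add_bind]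
      have hsplit : ({0} : Multiset ℕ) + ↑B + ↑C = (↑(List.range y) : Multiset ℕ) := by
        rw [hBco, hCco]
        have hyspl : y = (v₂ + 1) + m := by omega
        rw [hyspl, List.range_add (n := v₂+1) (m := m), ← Multiset.coe_add, Multiset.map_coe]
        have h5 : (↑(List.range (v₂+1)) : Multiset ℕ)
            = ({0} : Multiset ℕ) + (↑(List.range v₂) : Multiset ℕ).map (· + 1) := by
          rw [List.range_succ_eq_map, Multiset.map_coe]
          rfl
        rw [h5]
        have h6 : (↑((List.range m).map (fun x => v₂ + 1 + x)) : Multiset ℕ)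
            = (↑(List.range m) : Multiset ℕ).map (fun z => (a₂+b₂+2) + z) := by
          rw [Multiset.map_coe]
        rw [h6]
        abel
      rw [show ({0} : Multiset ℕ) + (↑B + ↑C) = ({0} : Multiset ℕ) + ↑B + ↑C from by abel, hsplit,
        ranges y q (v % y) (le_of_lt (Nat.mod_lt v (by omega))), hs, mul_comm, hqy]
    · rw [linDiffs_append _ _ hAne hSBCne, linDiffs_append _ _ hSBne hSCne]
      rw [linDiffs_colL, snakeC_linDiffs y q (by omega) B false,
        snakeC_linDiffs y (q+1) (by omega) C true]
      have hBlen : B.length = m := by rw [hB]; simp [hm]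
      have hClen : C.length = v₂ := by rw [hC]; simp [hthlen, hv₂]
      have hBdiff : linDiffs B = linDiffs gm := by
        rw [hB]
        apply linDiffs_map_sub
        intro z hz
        have := hmemgm z hz
        omega
      have hCdiff : linDiffs C = Multiset.replicate a₂ 1 + Multiset.replicate b₂ x := by
        rw [hC, ← hhdiff]
        apply linDiffs_map_sub
        intro z hz
        have : z ∈ (↑((0:ℕ)::ht) : Multiset ℕ) := by simpa using hz
        rw [hhperm] at this
        have : z < v₂ := by simpa using this
        omega
      -- junction 1 : between column A and snake B
      have hjunc1 : dd ((colL y (q+1) 0).getLast hAne)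
          ((snakeC y q false B ++ snakeC y (q+1) true C).head hSBCne) = gmh := by
        have hl : (colL y (q+1) 0).getLast hAne = 0 + q * y := by
          apply getLast_of_getLast?
          rw [colL_getLast? y (q+1) 0 (by omega)]
          simp
        have hr : (snakeC y q false B ++ snakeC y (q+1) true C).head hSBCne
            = (y - gmh) + (q-1)*y := by
          apply head_of_head?
          rw [List.head?_append_of_ne_nil _ hSBne]
          rw [hBc, snakeC_head? y q (by omega) false _ _]
          simp
        rw [hl, hr, hqt]
        simp only [Nat.add_sub_cancel, Nat.zero_add]
        have h1 : (t+1)*y = y + t*y := by ring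
        rw [h1]
        have h2 := dd_add_right y (y - gmh) (t*y)
        rw [h2]
        have hbnd : gmh ≤ m := (hmemgm gmh (by rw [hgm']; simp)).2
        have h3 : dd y (y - gmh) = dd (y - 0) (y - gmh) := by simp
        rw [h3, dd_sub y 0 gmh (by omega) (by omega), dd_zero_left]
      -- junction 2 : between snake B and snake C
      have hjunc2 : dd ((snakeC y q false B).getLast hSBne)
          ((snakeC y (q+1) true C).head hSCne) = dd (gm.getLast hgmne) (a₁+b₁) := by
        have hmodd : ¬ Even B.length := by
          rw [hBlen]
          rw [Nat.even_iff]
          omega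
        have hBlast : B.getLast hBne = y - gm.getLast hgmne := by
          apply getLast_of_getLast?
          rw [hB, List.getLast?_map, List.getLast?_eq_getLast hgmne]
          rfl
        have hl : (snakeC y q false B).getLast hSBne = y - (gm.getLast hgmne) := by
          apply getLast_of_getLast?
          rw [snakeC_getLast? y q (by omega) B false hBne]
          simp [hmodd, hBlast]
        have hr : (snakeC y (q+1) true C).head hSCne = v₂ := by
          apply head_of_head?
          rw [hCc, snakeC_head? y (q+1) (by omega) true _ _]
          simp
        rw [hl, hr]
        have hbnd : gm.getLast hgmne ≤ m := by
          have : gm.getLast hgmne ∈ gm := List.getLast_mem hgmne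
          exact (hmemgm _ this).2
        have h4 : v₂ = y - (a₁ + b₁) := by omega
        rw [h4, dd_sub y _ _ (by omega) (by omega)]
      rw [hjunc1, hjunc2, hBdiff, hCdiff, hBlen, hClen]
      -- the diffs of g
      have hgmhead : (gm ++ [a₁+b₁]).head? = some gmh := by
        rw [hgm']; rfl
      have hLone : Multiset.replicate a₁ 1 + Multiset.replicate b₁ x
          = gmh ::ₘ (dd (gm.getLast hgmne) (a₁+b₁) ::ₘ linDiffs gm) := by
        rw [← hgdiff, hgt, hgtdec]
        rw [linDiffs_cons_head 0 gmh _ hgmhead, dd_zero_left]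
        rw [linDiffs_concat gm (a₁+b₁) hgmne]
      have hcy : (q + 1 - 1) + m * (q-1) + v₂ * (q + 1 - 1) = c := by
        apply arith_lin _ y _ v hvy
        have h2 : (q + 1 - 1) + m * (q-1) + v₂ * (q + 1 - 1) + y = y * q + (a₂ + b₂ + 2) := by
          rw [hqt]
          simp only [Nat.add_sub_cancel]
          rw [hv₂, hym]
          ring
        rw [h2]
        omega
      rw [mset3_expand, hLone]
      rw [← hcy]
      simp only [← Multiset.singleton_add, Multiset.replicate_add]
      abel
    · rw [List.head?_append_of_ne_nil _ hAne]
      exact colL_head? y (q+1) 0 (by omega)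

end S7

/-- Shared-fauxset concatenation. With `v₁ = a₁ + b₁ + 1`,
`v₂ = a₂ + b₂ + 1`, `a = a₁ + a₂`, `b = b₁ + b₂`, `y = a + b + 1` and
`v = a + b + c + 1`: if `{1^{a₁}, x^{b₁}}` has a perfect linear realization,
`{1^{a₂}, x^{b₂}}` has a standard linear realization, and either `v₁` is even
with `v ≡ v₁ (mod y)`, or `v₁` is odd with `v ≡ v₂ + 1 (mod y)`, then
`{1^a, x^b, y^c}` has a standard linear realization. -/
theorem stmt7 (x a₁ b₁ a₂ b₂ c : ℕ) (hx : 2 ≤ x)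
    (h₁ : HasPerfectLinearRealization
      (Multiset.replicate a₁ 1 + Multiset.replicate b₁ x))
    (h₂ : HasStandardLinearRealization
      (Multiset.replicate a₂ 1 + Multiset.replicate b₂ x))
    (hcong :
      (Even (a₁ + b₁ + 1) ∧
        (a₁ + a₂ + b₁ + b₂ + c + 1) % (a₁ + a₂ + b₁ + b₂ + 1) =
          (a₁ + b₁ + 1) % (a₁ + a₂ + b₁ + b₂ + 1)) ∨
      (Odd (a₁ + b₁ + 1) ∧
        (a₁ + a₂ + b₁ + b₂ + c + 1) % (a₁ + a₂ + b₁ + b₂ + 1) =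
          (a₂ + b₂ + 1 + 1) % (a₁ + a₂ + b₁ + b₂ + 1))) :
    HasStandardLinearRealization
      (mset3 (a₁ + a₂) (b₁ + b₂) c x (a₁ + a₂ + b₁ + b₂ + 1)) := by
  obtain ⟨g, ⟨hgperm, hgdiff⟩, hghead, hglast⟩ := h₁
  obtain ⟨h, ⟨hhperm, hhdiff⟩, hhhead⟩ := h₂
  have hcard1 : Multiset.card (Multiset.replicate a₁ 1 + Multiset.replicate b₁ x) = a₁ + b₁ := by
    simp
  have hcard2 : Multiset.card (Multiset.replicate a₂ 1 + Multiset.replicate b₂ x) = a₂ + b₂ := by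
    simp
  rw [hcard1] at hgperm hglast
  rw [hcard2] at hhperm
  rcases hcong with ⟨he, hm⟩ | ⟨ho, hm⟩
  · exact S7.evenCase x a₁ b₁ a₂ b₂ c g h (Multiset.coe_eq_coe.mpr hgperm) hgdiff hghead
      hglast (Multiset.coe_eq_coe.mpr hhperm) hhdiff hhhead he hm
  · exact S7.oddCase x a₁ b₁ a₂ b₂ c g h (Multiset.coe_eq_coe.mpr hgperm) hgdiff hghead
      hglast (Multiset.coe_eq_coe.mpr hhperm) hhdiff hhhead ho hm
end

section
/- Let g_1, …, g_v be a standard linear realization of a multiset L, and suppose there are an index i, an integer w ≥ 1 with i + w ≤ v, and a positive integer x such that g_{i+j} = g_i + j·x for j = 0, 1, …, w (so this consecutive segment contributes w differences equal to x). If M is a multiset of size w that has a perfect linear realization, then the multiset (L − {x^w}) ∪ x·M, obtained from L by deleting w copies of x and adjoining the multiset x·M = {x·m : m ∈ M}, has a standard linear realization. -/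
lemma linDiffs_cons_cons (a b : ℕ) (t : List ℕ) :
    linDiffs (a :: b :: t) = ((a - b) + (b - a)) ::ₘ linDiffs (b :: t) := rfl

lemma linDiffs_append_cons (u : List ℕ) (b : ℕ) (v : List ℕ) :
    linDiffs (u ++ b :: v) = linDiffs (u ++ [b]) + linDiffs (b :: v) := by
  induction u with
  | nil => simp [linDiffs]
  | cons a u ih =>
    cases u with
    | nil => simp [linDiffs_cons_cons, linDiffs]
    | cons c u' =>
      simp only [List.cons_append, linDiffs_cons_cons] at *
      rw [ih, Multiset.cons_add]

lemma linDiffs_decomp (a s b : List ℕ) (c e : ℕ)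
    (hh : s.head? = some c) (he : s.getLast? = some e) :
    linDiffs (a ++ s ++ b) =
      linDiffs (a ++ [c]) + linDiffs s + linDiffs (e :: b) := by
  obtain ⟨t, rfl⟩ : ∃ t, s = c :: t := by
    cases s with
    | nil => simp at hh
    | cons h t => simp at hh; exact ⟨t, by rw [hh]⟩
  have hne : (c :: t) ≠ [] := by simp
  have hLast : (c :: t).getLast hne = e := by
    rw [List.getLast?_eq_getLast hne] at he; simpa using he
  have hdecomp : c :: t = (c :: t).dropLast ++ [e] := by
    conv_lhs => rw [← List.dropLast_append_getLast hne]
    rw [hLast]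
  have key : linDiffs ((c :: t) ++ b) = linDiffs (c :: t) + linDiffs (e :: b) := by
    conv_lhs => rw [hdecomp]
    rw [List.append_assoc, List.singleton_append, linDiffs_append_cons, ← hdecomp]
  calc linDiffs (a ++ (c :: t) ++ b)
      = linDiffs (a ++ [c]) + linDiffs ((c :: t) ++ b) := by
        rw [List.append_assoc, List.cons_append, linDiffs_append_cons]
  _ = _ := by rw [key, add_assoc]

lemma linDiffs_range' (x : ℕ) : ∀ (n c : ℕ),
    linDiffs (List.range' c (n + 1) x) = Multiset.replicate n x := by
  intro n
  induction n with
  | zero => intro c; simp [linDiffs]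
  | succ n ih =>
    intro c
    rw [List.range'_succ, List.range'_succ, linDiffs_cons_cons, ← List.range'_succ, ih]
    have : c - (c + x) + (c + x - c) = x := by omega
    rw [this, Multiset.replicate_succ]

lemma linDiffs_map_affine (c x : ℕ) (m : List ℕ) :
    linDiffs (m.map (fun t => c + t * x)) =
      Multiset.map (fun d => x * d) (linDiffs m) := by
  unfold linDiffs
  rw [show (m.map (fun t => c + t * x)).tail = m.tail.map (fun t => c + t * x) by
    cases m <;> simp]
  rw [List.zipWith_map, Multiset.map_coe, List.map_zipWith]
  have hfun : (fun a b : ℕ => (c + a * x - (c + b * x)) + (c + b * x - (c + a * x)))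
      = (fun a b : ℕ => x * (a - b + (b - a))) := by
    funext a b
    have h1 : c + a * x - (c + b * x) = (a - b) * x := by
      rw [Nat.add_sub_add_left, ← Nat.sub_mul]
    have h2 : c + b * x - (c + a * x) = (b - a) * x := by
      rw [Nat.add_sub_add_left, ← Nat.sub_mul]
    rw [h1, h2, ← Nat.add_mul, Nat.mul_comm]
  rw [hfun]


/-- Reordering one generic fauxset. If a standard linear
realization `l` of `L` contains a consecutive segment of `w` differences all
equal to `x` (positions `i, i+1, …, i+w`, 0-indexed), and `M` is a multiset of
size `w` with a perfect linear realization, then `(L - {x^w}) ∪ x·M` has a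
standard linear realization. -/
theorem stmt11 (L M : Multiset ℕ) (x : ℕ) (hx : 0 < x) (l : List ℕ)
    (hl : IsLinearRealization L l) (hstd : l.head? = some 0)
    (i w : ℕ) (hw : 1 ≤ w) (hiw : i + w < l.length)
    (hseg : ∀ j : ℕ, j ≤ w → l.getD (i + j) 0 = l.getD i 0 + j * x)
    (hM : Multiset.card M = w) (hMperf : HasPerfectLinearRealization M) :
    HasStandardLinearRealization
      (L - Multiset.replicate w x + Multiset.map (fun m => x * m) M) := by
  obtain ⟨hperm, hdiffs⟩ := hl
  obtain ⟨m, ⟨hmperm, hmdiffs⟩, hmhead, hmlast⟩ := hMperf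
  set c := l.getD i 0 with hc
  set f : ℕ → ℕ := fun t => c + t * x with hf
  set a := l.take i with ha
  set s := (l.drop i).take (w + 1) with hsdef
  set b := l.drop (i + (w + 1)) with hb
  -- the segment as an explicit list
  have hrange_map : List.range' c (w + 1) x = (List.range (w + 1)).map f := by
    apply List.ext_getElem
    · simp
    · intro n h1 h2
      simp [List.getElem_range', hf, Nat.mul_comm]
  have hs : s = List.range' c (w + 1) x := by
    apply List.ext_getElem
    · simp only [hsdef, List.length_take, List.length_drop, List.length_range']
      omega
    · intro n h1 h2
      have hn : n < w + 1 := by simpa using h2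
      have hin : i + n < l.length := by omega
      have := hseg n (by omega)
      rw [List.getD_eq_getElem l 0 hin] at this
      simp only [hsdef, List.getElem_take, List.getElem_drop, List.getElem_range']
      rw [this, Nat.mul_comm]
  have hsplit : l = a ++ s ++ b := by
    rw [List.append_assoc, ha, hsdef, hb]
    rw [← List.drop_drop]
    rw [List.take_append_drop, List.take_append_drop]
  -- heads and lasts
  have hshead : s.head? = some c := by
    rw [hs, List.range'_succ]; rfl
  have hslast : s.getLast? = some (c + w * x) := by
    rw [hs, hrange_map, List.range_succ, List.map_append]
    simpa [hf] using List.getLast?_concat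
  -- facts about m
  have hmlen : m.length = w + 1 := by
    rw [hmperm.length_eq, List.length_range, hM]
  set s' : List ℕ := m.map f with hs'
  have hs'head : s'.head? = some c := by
    rw [hs', List.head?_map, hmhead]
    simp [hf]
  have hs'last : s'.getLast? = some (c + w * x) := by
    rw [hs', List.getLast?_map, hmlast, hM]
    rfl
  set l' := a ++ s' ++ b with hl'
  -- multiset decompositions
  set D1 := linDiffs (a ++ [c]) with hD1
  set D2 := linDiffs ((c + w * x) :: b) with hD2
  have hLdec : L = D1 + Multiset.replicate w x + D2 := by
    rw [← hdiffs]
    conv_lhs => rw [hsplit]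
    rw [linDiffs_decomp a s b c (c + w * x) hshead hslast, hs, linDiffs_range']
  have hl'dec : linDiffs l' = D1 + Multiset.map (fun d => x * d) M + D2 := by
    rw [hl', linDiffs_decomp a s' b c (c + w * x) hs'head hs'last, hs',
      linDiffs_map_affine, hmdiffs]
  have hsub : L - Multiset.replicate w x = D1 + D2 := by
    rw [hLdec, add_right_comm, add_tsub_cancel_right]
  have hdiff' : linDiffs l' = L - Multiset.replicate w x + Multiset.map (fun d => x * d) M := by
    rw [hsub, hl'dec, add_right_comm]
  -- cardinality
  have hcard : Multiset.card (L - Multiset.replicate w x + Multiset.map (fun d => x * d) M)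
      = Multiset.card L := by
    rw [hsub, hLdec]
    simp only [Multiset.card_add, Multiset.card_replicate, Multiset.card_map, hM]
    omega
  -- permutation
  have hsperm : s'.Perm s := by
    rw [hs, hrange_map]
    exact (hmperm.map f).trans (by rw [hM])
  have hlperm : l'.Perm l := by
    have h := (hsperm.append_right b).append_left a
    rw [← List.append_assoc, ← List.append_assoc, ← hl'] at h
    rw [hsplit]
    exact h
  refine ⟨l', ⟨?_, hdiff'⟩, ?_⟩
  · rw [hcard]
    exact hlperm.trans hperm
  · -- head
    have h1 : l'.head? = a.head?.or (some c) := by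
      rw [hl', List.append_assoc, List.head?_append, List.head?_append, hs'head]
      rfl
    have h2 : l.head? = a.head?.or (some c) := by
      conv_lhs => rw [hsplit]
      rw [List.append_assoc, List.head?_append, List.head?_append, hshead]
      rfl
    rw [h1, ← h2, hstd]
end

section
/- Let x ≥ 2 be even. For every integer s ≥ 1, the multiset {1^{x+2s−2}, x^{2sx−2s}} (consisting of x+2s−2 copies of 1 and 2sx−2s copies of x) has a perfect linear realization, and the multiset {1^{x+2s−1}, x^{2sx−2s+2}} (consisting of x+2s−1 copies of 1 and 2sx−2s+2 copies of x) has a perfect linear realization. -/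
namespace Stmt13Aux

def diffN (a b : ℕ) : ℕ := (a - b) + (b - a)

lemma diffN_right (a d : ℕ) : diffN a (a + d) = d := by simp [diffN]
lemma diffN_left (a d : ℕ) : diffN (a + d) a = d := by simp [diffN]

lemma linDiffs_single (a : ℕ) : linDiffs [a] = 0 := rfl
lemma linDiffs_cons_cons (a b : ℕ) (l : List ℕ) :
    linDiffs (a :: b :: l) = diffN a b ::ₘ linDiffs (b :: l) := rfl

lemma linDiffs_append (l : List ℕ) (b : ℕ) (m : List ℕ) :
    linDiffs (l ++ b :: m) = linDiffs (l ++ [b]) + linDiffs (b :: m) := by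
  induction l with
  | nil => simp [linDiffs]
  | cons a l ih =>
    cases l with
    | nil =>
      simp only [List.singleton_append, List.cons_append, List.nil_append,
        linDiffs_cons_cons]
      rw [linDiffs_single]
      simp [Multiset.cons_add]
    | cons c l' =>
      simp only [List.cons_append, linDiffs_cons_cons] at *
      rw [ih, Multiset.cons_add]

lemma coe_append (l m : List ℕ) : (↑(l ++ m) : Multiset ℕ) = ↑l + ↑m := by simp

lemma range_add_two (n : ℕ) : Multiset.range (n+2)
    = 0 ::ₘ 1 ::ₘ (Multiset.range n).map (·+2) := by
  have h : List.range (n+2) = [0,1] ++ (List.range n).map (2+·) := by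
    rw [Nat.add_comm n 2, List.range_add]; rfl
  rw [Multiset.range, h]
  show ((0 :: 1 :: (List.range n).map (2+·) : List ℕ) : Multiset ℕ) = _
  rw [← Multiset.cons_coe, ← Multiset.cons_coe, ← Multiset.map_coe]
  congr 1
  congr 1
  exact Multiset.map_congr rfl (fun i _ => Nat.add_comm 2 i)

/-! ### Pieces -/

def cdL (x : ℕ) : ℕ → ℕ → List ℕ
  | 0, _ => []
  | m+1, a => a :: cdL x m (a + x)

def cuL (x : ℕ) : ℕ → ℕ → List ℕ
  | 0, _ => []
  | m+1, a => (a + m * x) :: cuL x m a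

def colMS (x m a : ℕ) : Multiset ℕ := (Multiset.range m).map (fun i => a + i * x)

lemma colMS_zero (x a : ℕ) : colMS x 0 a = 0 := rfl

lemma colMS_succ_bot (x m a : ℕ) : colMS x (m+1) a = a ::ₘ colMS x m (a + x) := by
  unfold colMS
  have h : Multiset.range (m+1) = (0 : ℕ) ::ₘ (Multiset.range m).map Nat.succ := by
    have := @List.range_succ_eq_map m
    rw [Multiset.range, this]
    rw [← Multiset.cons_coe]
    congr 1
  rw [h]
  simp only [Multiset.map_cons, Multiset.map_map]
  congr 1
  · simp
  · exact Multiset.map_congr rfl (fun i _ => by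
      simp only [Function.comp_apply, Nat.succ_eq_add_one]; ring)

lemma colMS_succ_top (x m a : ℕ) : colMS x (m+1) a = (a + m * x) ::ₘ colMS x m a := by
  unfold colMS
  rw [Multiset.range_succ]
  simp

lemma cdL_coe (x : ℕ) : ∀ m a, (↑(cdL x m a) : Multiset ℕ) = colMS x m a := by
  intro m
  induction m with
  | zero => intro a; rfl
  | succ m ih =>
    intro a
    show (↑(a :: cdL x m (a+x)) : Multiset ℕ) = _
    rw [← Multiset.cons_coe, ih, colMS_succ_bot]

lemma cuL_coe (x : ℕ) : ∀ m a, (↑(cuL x m a) : Multiset ℕ) = colMS x m a := by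
  intro m
  induction m with
  | zero => intro a; rfl
  | succ m ih =>
    intro a
    show (↑((a + m*x) :: cuL x m a) : Multiset ℕ) = _
    rw [← Multiset.cons_coe, ih, colMS_succ_top]

lemma cdL_diffs (x : ℕ) : ∀ k a b, linDiffs (cdL x (k+1) a ++ [b])
    = diffN (a + k * x) b ::ₘ Multiset.replicate k x := by
  intro k
  induction k with
  | zero => intro a b; simp [cdL, linDiffs_cons_cons, linDiffs_single]
  | succ k ih =>
    intro a b
    show linDiffs (a :: ((a+x) :: cdL x k (a+x+x)) ++ [b]) = _
    rw [show (a :: ((a+x) :: cdL x k (a+x+x)) ++ [b]) =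
      a :: (((a+x) :: cdL x k (a+x+x)) ++ [b]) from rfl]
    rw [show ((a+x) :: cdL x k (a+x+x)) ++ [b] = (a+x) :: (cdL x k (a+x+x) ++ [b]) from rfl]
    rw [linDiffs_cons_cons, diffN_right]
    have h2 : (a+x) :: (cdL x k (a+x+x) ++ [b]) = cdL x (k+1) (a+x) ++ [b] := rfl
    rw [h2, ih]
    rw [show a + x + k * x = a + (k+1) * x by ring]
    rw [Multiset.replicate_succ, Multiset.cons_swap]

lemma cuL_diffs (x : ℕ) : ∀ k a b, linDiffs (cuL x (k+1) a ++ [b])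
    = diffN a b ::ₘ Multiset.replicate k x := by
  intro k
  induction k with
  | zero => intro a b; simp [cuL, linDiffs_cons_cons, linDiffs_single]
  | succ k ih =>
    intro a b
    show linDiffs ((a + (k+1)*x) :: ((a + k*x) :: cuL x k a ++ [b])) = _
    rw [show ((a + k*x) :: cuL x k a ++ [b]) = (a + k*x) :: (cuL x k a ++ [b]) from rfl,
      linDiffs_cons_cons]
    rw [show a + (k+1)*x = (a + k*x) + x by ring, diffN_left]
    have h2 : (a + k*x) :: (cuL x k a ++ [b]) = cuL x (k+1) a ++ [b] := rfl
    rw [h2, ih, Multiset.replicate_succ, Multiset.cons_swap]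


/-! ### zigzag piece (last two columns, family 1) -/

def zzL (x c : ℕ) : ℕ → ℕ → List ℕ
  | 0, r => [c + r * x]
  | k+1, r => (c + r*x) :: (c+1 + r*x) :: (c+1 + (r+1)*x) :: (c + (r+1)*x) :: zzL x c k (r+2)

lemma zzL_ne_nil (x c k r : ℕ) : zzL x c k r ≠ [] := by cases k <;> simp [zzL]

lemma zzL_head (x c k r : ℕ) : ∃ T, zzL x c k r = (c + r * x) :: T := by
  cases k <;> exact ⟨_, rfl⟩

lemma zzL_diffs (x c : ℕ) : ∀ k r, linDiffs (zzL x c k r)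
    = Multiset.replicate (2*k) 1 + Multiset.replicate (2*k) x := by
  intro k
  induction k with
  | zero => intro r; simp [zzL, linDiffs_single]
  | succ k ih =>
    intro r
    obtain ⟨T, hT⟩ := zzL_head x c k (r+2)
    show linDiffs ((c + r*x) :: (c+1 + r*x) :: (c+1 + (r+1)*x) :: (c + (r+1)*x) ::
      zzL x c k (r+2)) = _
    rw [hT, linDiffs_cons_cons, linDiffs_cons_cons, linDiffs_cons_cons, linDiffs_cons_cons,
      ← hT, ih]
    have h1 : (r+1)*x = r*x + x := by ring
    have h2 : (r+2)*x = r*x + 2*x := by ring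
    rw [show diffN (c + r*x) (c+1 + r*x) = 1 from by unfold diffN; omega]
    rw [show diffN (c+1 + r*x) (c+1 + (r+1)*x) = x from by unfold diffN; omega]
    rw [show diffN (c+1 + (r+1)*x) (c + (r+1)*x) = 1 from by unfold diffN; omega]
    rw [show diffN (c + (r+1)*x) (c + (r+2)*x) = x from by unfold diffN; omega]
    rw [show 2*(k+1) = 2*k+1+1 by ring]
    simp only [Multiset.replicate_succ]
    simp only [← Multiset.singleton_add]
    abel

lemma zzL_coe (x c : ℕ) : ∀ k r, (↑(zzL x c k r) : Multiset ℕ)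
    = colMS x (2*k+1) (c + r*x) + colMS x (2*k) (c+1 + r*x) := by
  intro k
  induction k with
  | zero =>
    intro r
    show (↑[c + r*x] : Multiset ℕ) = _
    rw [show 2*0+1 = 0+1 by ring, show 2*0 = 0 by ring, colMS_succ_bot, colMS_zero]
    rfl
  | succ k ih =>
    intro r
    show (↑((c + r*x) :: (c+1 + r*x) :: (c+1 + (r+1)*x) :: (c + (r+1)*x) ::
      zzL x c k (r+2)) : Multiset ℕ) = _
    simp only [← Multiset.cons_coe]
    rw [ih]
    conv_rhs =>
      rw [show 2*(k+1)+1 = (2*k+1)+1+1 by ring, show 2*(k+1) = 2*k+1+1 by ring]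
      rw [colMS_succ_bot x ((2*k+1)+1) (c + r*x), colMS_succ_bot x (2*k+1) (c + r*x + x),
        colMS_succ_bot x (2*k+1) (c+1 + r*x), colMS_succ_bot x (2*k) (c+1 + r*x + x)]
      rw [show c + r*x + x = c + (r+1)*x by ring]
      rw [show c + (r+1)*x + x = c + (r+2)*x by ring]
      rw [show c+1 + r*x + x = c+1 + (r+1)*x by ring]
      rw [show c+1 + (r+1)*x + x = c+1 + (r+2)*x by ring]
    simp only [← Multiset.singleton_add]
    abel

lemma zzL_last (x c : ℕ) : ∀ k r, (zzL x c k r).getLast? = some (c + (r + 2*k) * x) := by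
  intro k
  induction k with
  | zero => intro r; show [c + r*x].getLast? = _; rw [show r + 2*0 = r by ring]; rfl
  | succ k ih =>
    intro r
    have hsplit : zzL x c (k+1) r
        = [c + r*x, c+1 + r*x, c+1 + (r+1)*x, c + (r+1)*x] ++ zzL x c k (r+2) := rfl
    rw [hsplit, List.getLast?_append_of_ne_nil _ (zzL_ne_nil x c k (r+2)), ih]
    rw [show r+2+2*k = r + 2*(k+1) by ring]

/-! ### zigzag piece (columns 1–2, family 2) -/

def yL (x c : ℕ) : ℕ → ℕ → List ℕ
  | 0, r => [c + r*x, c + (r+1)*x]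
  | k+1, r => (c + r*x) :: (c + (r+1)*x) :: (c+1 + (r+1)*x) :: (c+1 + (r+2)*x) :: yL x c k (r+2)

lemma yL_ne_nil (x c k r : ℕ) : yL x c k r ≠ [] := by cases k <;> simp [yL]

lemma yL_head (x c k r : ℕ) : ∃ T, yL x c k r = (c + r * x) :: T := by
  cases k <;> exact ⟨_, rfl⟩

lemma yL_diffs (x c : ℕ) : ∀ k r, linDiffs (yL x c k r)
    = Multiset.replicate (2*k) 1 + Multiset.replicate (2*k+1) x := by
  intro k
  induction k with
  | zero =>
    intro r
    show linDiffs [c + r*x, c + (r+1)*x] = _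
    rw [linDiffs_cons_cons, linDiffs_single]
    have h1 : (r+1)*x = r*x + x := by ring
    rw [show diffN (c + r*x) (c + (r+1)*x) = x from by unfold diffN; omega]
    simp
  | succ k ih =>
    intro r
    obtain ⟨T, hT⟩ := yL_head x c k (r+2)
    show linDiffs ((c + r*x) :: (c + (r+1)*x) :: (c+1 + (r+1)*x) :: (c+1 + (r+2)*x) ::
      yL x c k (r+2)) = _
    rw [hT, linDiffs_cons_cons, linDiffs_cons_cons, linDiffs_cons_cons, linDiffs_cons_cons,
      ← hT, ih]
    have h1 : (r+1)*x = r*x + x := by ring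
    have h2 : (r+2)*x = r*x + 2*x := by ring
    rw [show diffN (c + r*x) (c + (r+1)*x) = x from by unfold diffN; omega]
    rw [show diffN (c + (r+1)*x) (c+1 + (r+1)*x) = 1 from by unfold diffN; omega]
    rw [show diffN (c+1 + (r+1)*x) (c+1 + (r+2)*x) = x from by unfold diffN; omega]
    rw [show diffN (c+1 + (r+2)*x) (c + (r+2)*x) = 1 from by unfold diffN; omega]
    rw [show 2*(k+1) = 2*k+1+1 by ring]
    simp only [Multiset.replicate_succ]
    simp only [← Multiset.singleton_add]
    abel

lemma yL_coe (x c : ℕ) : ∀ k r, (↑(yL x c k r) : Multiset ℕ)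
    = colMS x (2*k+2) (c + r*x) + colMS x (2*k) (c+1 + (r+1)*x) := by
  intro k
  induction k with
  | zero =>
    intro r
    show (↑[c + r*x, c + (r+1)*x] : Multiset ℕ) = _
    rw [show 2*0+2 = (0+1)+1 by ring, show 2*0 = 0 by ring, colMS_succ_bot, colMS_succ_bot,
      colMS_zero]
    rw [show c + r*x + x = c + (r+1)*x by ring]
    rfl
  | succ k ih =>
    intro r
    show (↑((c + r*x) :: (c + (r+1)*x) :: (c+1 + (r+1)*x) :: (c+1 + (r+2)*x) ::
      yL x c k (r+2)) : Multiset ℕ) = _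
    simp only [← Multiset.cons_coe]
    rw [ih, show (c+1 + (r+2+1)*x) = (c+1 + (r+3)*x) by ring]
    conv_rhs =>
      rw [show 2*(k+1)+2 = (2*k+2)+1+1 by ring, show 2*(k+1) = 2*k+1+1 by ring]
      rw [colMS_succ_bot x ((2*k+2)+1) (c + r*x), colMS_succ_bot x (2*k+2) (c + r*x + x),
        colMS_succ_bot x (2*k+1) (c+1 + (r+1)*x), colMS_succ_bot x (2*k) (c+1 + (r+1)*x + x)]
      rw [show c + r*x + x = c + (r+1)*x by ring]
      rw [show c + (r+1)*x + x = c + (r+2)*x by ring]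
      rw [show c+1 + (r+1)*x + x = c+1 + (r+2)*x by ring]
      rw [show c+1 + (r+2)*x + x = c+1 + (r+3)*x by ring]
    simp only [← Multiset.singleton_add]
    abel

lemma yL_last (x c : ℕ) : ∀ k r, (yL x c k r).getLast? = some (c + (r + 2*k + 1) * x) := by
  intro k
  induction k with
  | zero => intro r; show [c + r*x, c + (r+1)*x].getLast? = _;
            rw [show r + 2*0 + 1 = r+1 by ring]; rfl
  | succ k ih =>
    intro r
    have hsplit : yL x c (k+1) r
        = [c + r*x, c + (r+1)*x, c+1 + (r+1)*x, c+1 + (r+2)*x] ++ yL x c k (r+2) := rfl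
    rw [hsplit, List.getLast?_append_of_ne_nil _ (yL_ne_nil x c k (r+2)), ih]
    rw [show r+2+2*k+1 = r + 2*(k+1) + 1 by ring]


/-! ### snake through first columns (family 1) -/

def p1L (x n : ℕ) : ℕ → ℕ → List ℕ
  | 0, _ => []
  | k+1, c => cdL x n c ++ cuL x n (c+1) ++ p1L x n k (c+2)

lemma p1L_shape (x m k c : ℕ) (l : List ℕ) :
    ∃ T, p1L x (m+1) k c ++ (c + 2*k) :: l = c :: T := by
  cases k with
  | zero => exact ⟨l, by simp [p1L]⟩
  | succ k =>
    refine ⟨cdL x m (c+x) ++ (cuL x (m+1) (c+1) ++ (p1L x (m+1) k (c+2) ++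
      (c + 2*(k+1)) :: l)), ?_⟩
    simp [p1L, cdL, List.append_assoc]

lemma p1L_diffs (x m : ℕ) : ∀ k c (l : List ℕ),
    linDiffs (p1L x (m+1) k c ++ (c + 2*k) :: l)
      = Multiset.replicate (2*k) 1 + Multiset.replicate (2*k*m) x
        + linDiffs ((c + 2*k) :: l) := by
  intro k
  induction k with
  | zero => intro c l; simp [p1L]
  | succ k ih =>
    intro c l
    have harg : c + 2*(k+1) = (c+2) + 2*k := by ring
    obtain ⟨T, hT⟩ := p1L_shape x m k (c+2) l
    have hw : p1L x (m+1) (k+1) c ++ (c + 2*(k+1)) :: l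
        = cdL x (m+1) c ++ (cuL x (m+1) (c+1) ++ ((c+2) :: T)) := by
      rw [harg, ← hT]; simp [p1L, List.append_assoc]
    rw [hw]
    have hcu : cuL x (m+1) (c+1) ++ ((c+2) :: T)
        = (c+1+m*x) :: (cuL x m (c+1) ++ ((c+2) :: T)) := rfl
    rw [hcu, linDiffs_append (cdL x (m+1) c) (c+1+m*x) _, ← hcu, cdL_diffs,
      linDiffs_append (cuL x (m+1) (c+1)) (c+2) T, cuL_diffs, ← hT, ih]
    rw [show diffN (c + m*x) (c+1+m*x) = 1 from by unfold diffN; omega]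
    rw [show diffN (c+1) (c+2) = 1 from by unfold diffN; omega]
    rw [harg]
    rw [show 2*(k+1)*m = 2*k*m + (m+m) by ring, show 2*(k+1) = (2*k)+1+1 by ring]
    simp only [Multiset.replicate_succ, Multiset.replicate_add]
    simp only [← Multiset.singleton_add]
    abel

lemma p1L_coe (x m : ℕ) : ∀ k c, (↑(p1L x (m+1) k c) : Multiset ℕ)
    = (Multiset.range (2*k)).bind (fun j => colMS x (m+1) (c+j)) := by
  intro k
  induction k with
  | zero => intro c; simp [p1L]
  | succ k ih =>
    intro c
    show (↑(cdL x (m+1) c ++ cuL x (m+1) (c+1) ++ p1L x (m+1) k (c+2)) : Multiset ℕ) = _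
    rw [coe_append, coe_append, cdL_coe, cuL_coe, ih]
    conv_rhs =>
      rw [show 2*(k+1) = 2*k+2 by ring, range_add_two, Multiset.cons_bind, Multiset.cons_bind,
        Multiset.bind_map]
    rw [show (fun a => colMS x (m+1) (c+(a+2))) = (fun a => colMS x (m+1) (c+2+a)) from
      funext (fun a => by rw [show c+(a+2) = c+2+a by ring])]
    rw [show c+0 = c from rfl]
    abel

/-! ### snake through high columns (family 2) -/

def q2L (x n c : ℕ) : ℕ → List ℕ
  | 0 => cuL x n c
  | j+1 => cuL x n (c + 2*(j+1)) ++ cdL x n (c + 2*j+1) ++ q2L x n c j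

lemma q2L_shape (x m c : ℕ) : ∀ j, ∃ T, q2L x (m+1) c j = (c + 2*j + m*x) :: T := by
  intro j
  cases j with
  | zero => exact ⟨cuL x m c, by simp [q2L, cuL]⟩
  | succ j =>
    refine ⟨cuL x m (c + 2*(j+1)) ++ (cdL x (m+1) (c + 2*j+1) ++ q2L x (m+1) c j), ?_⟩
    simp [q2L, cuL, List.append_assoc]

lemma q2L_diffs (x m c : ℕ) (b : ℕ) (hb : b + 1 = c) : ∀ j (l : List ℕ),
    linDiffs (q2L x (m+1) c j ++ b :: l)
      = Multiset.replicate (2*j+1) 1 + Multiset.replicate ((2*j+1)*m) x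
        + linDiffs (b :: l) := by
  intro j
  induction j with
  | zero =>
    intro l
    show linDiffs (cuL x (m+1) c ++ b :: l) = _
    rw [linDiffs_append (cuL x (m+1) c) b l, cuL_diffs]
    rw [show diffN c b = 1 from by unfold diffN; omega]
    rw [show 2*0+1 = 0+1 by ring, show (2*0+1)*m = m from by ring]
    simp only [Multiset.replicate_succ, Multiset.replicate_zero]
    simp only [← Multiset.singleton_add]
    abel
  | succ j ih =>
    intro l
    obtain ⟨T, hT⟩ := q2L_shape x m c j
    have hw : q2L x (m+1) c (j+1) ++ b :: l
        = cuL x (m+1) (c + 2*(j+1)) ++ (cdL x (m+1) (c + 2*j+1) ++ ((c + 2*j + m*x) :: (T ++ b :: l))) := by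
      show (cuL x (m+1) (c + 2*(j+1)) ++ cdL x (m+1) (c + 2*j+1) ++ q2L x (m+1) c j) ++ b :: l = _
      rw [hT]; simp [List.append_assoc]
    rw [hw]
    have hcd : cdL x (m+1) (c + 2*j+1) ++ ((c + 2*j + m*x) :: (T ++ b :: l))
        = (c + 2*j+1) :: (cdL x m (c + 2*j+1+x) ++ ((c + 2*j + m*x) :: (T ++ b :: l))) := rfl
    rw [hcd, linDiffs_append (cuL x (m+1) (c + 2*(j+1))) (c + 2*j+1) _, ← hcd, cuL_diffs,
      linDiffs_append (cdL x (m+1) (c + 2*j+1)) (c + 2*j + m*x) (T ++ b :: l), cdL_diffs]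
    have hTb : (c + 2*j + m*x) :: (T ++ b :: l) = q2L x (m+1) c j ++ b :: l := by
      rw [hT]; rfl
    rw [hTb, ih]
    rw [show diffN (c + 2*(j+1)) (c + 2*j+1) = 1 from by unfold diffN; omega]
    rw [show diffN (c + 2*j+1 + m*x) (c + 2*j + m*x) = 1 from by unfold diffN; omega]
    rw [show (2*(j+1)+1)*m = (2*j+1)*m + (m+m) by ring, show 2*(j+1)+1 = (2*j+1)+1+1 by ring]
    simp only [Multiset.replicate_succ, Multiset.replicate_add]
    simp only [← Multiset.singleton_add]
    abel

lemma q2L_coe (x m c : ℕ) : ∀ j, (↑(q2L x (m+1) c j) : Multiset ℕ)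
    = (Multiset.range (2*j+1)).bind (fun i => colMS x (m+1) (c+i)) := by
  intro j
  induction j with
  | zero =>
    show (↑(cuL x (m+1) c) : Multiset ℕ) = _
    rw [cuL_coe]
    rw [show 2*0+1 = 0+1 by ring, Multiset.range_succ, Multiset.cons_bind]
    simp
  | succ j ih =>
    show (↑(cuL x (m+1) (c + 2*(j+1)) ++ cdL x (m+1) (c + 2*j+1) ++ q2L x (m+1) c j) : Multiset ℕ) = _
    rw [coe_append, coe_append, cuL_coe, cdL_coe, ih]
    conv_rhs =>
      rw [show 2*(j+1)+1 = ((2*j+1)+1)+1 by ring, Multiset.range_succ, Multiset.range_succ,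
        Multiset.cons_bind, Multiset.cons_bind]
    rw [show c + ((2*j+1)+1) = c + 2*(j+1) by ring, show c + (2*j+1) = c + 2*j+1 by ring]
    abel

/-! ### the x = 2 second-family list -/

def e2L : ℕ → ℕ → List ℕ
  | 0, a => [a, a+2, a+1, a+3]
  | k+1, a => a :: (a+2) :: (a+1) :: (a+3) :: e2L k (a+4)

lemma e2L_ne_nil (k a : ℕ) : e2L k a ≠ [] := by cases k <;> simp [e2L]

lemma e2L_head (k a : ℕ) : ∃ T, e2L k a = a :: T := by cases k <;> exact ⟨_, rfl⟩

lemma e2L_diffs : ∀ k a, linDiffs (e2L k a)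
    = Multiset.replicate (2*k+1) 1 + Multiset.replicate (2*k+2) 2 := by
  intro k
  induction k with
  | zero =>
    intro a
    show linDiffs [a, a+2, a+1, a+3] = _
    rw [linDiffs_cons_cons, linDiffs_cons_cons, linDiffs_cons_cons, linDiffs_single]
    rw [show diffN a (a+2) = 2 from by unfold diffN; omega]
    rw [show diffN (a+2) (a+1) = 1 from by unfold diffN; omega]
    rw [show diffN (a+1) (a+3) = 2 from by unfold diffN; omega]
    rw [show 2*0+1 = 0+1 by ring, show 2*0+2 = 0+1+1 by ring]
    simp only [Multiset.replicate_succ, Multiset.replicate_zero]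
    simp only [← Multiset.singleton_add]
    abel
  | succ k ih =>
    intro a
    obtain ⟨T, hT⟩ := e2L_head k (a+4)
    show linDiffs (a :: (a+2) :: (a+1) :: (a+3) :: e2L k (a+4)) = _
    rw [hT, linDiffs_cons_cons, linDiffs_cons_cons, linDiffs_cons_cons, linDiffs_cons_cons,
      ← hT, ih]
    rw [show diffN a (a+2) = 2 from by unfold diffN; omega]
    rw [show diffN (a+2) (a+1) = 1 from by unfold diffN; omega]
    rw [show diffN (a+1) (a+3) = 2 from by unfold diffN; omega]
    rw [show diffN (a+3) (a+4) = 1 from by unfold diffN; omega]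
    rw [show 2*(k+1)+2 = (2*k+2)+1+1 by ring, show 2*(k+1)+1 = (2*k+1)+1+1 by ring]
    simp only [Multiset.replicate_succ]
    simp only [← Multiset.singleton_add]
    abel

lemma e2L_coe : ∀ k a, (↑(e2L k a) : Multiset ℕ)
    = (Multiset.range (4*k+4)).map (a + ·) := by
  intro k
  induction k with
  | zero =>
    intro a
    show (↑[a, a+2, a+1, a+3] : Multiset ℕ) = _
    have h4 : (4*0+4) = 3+1 := by ring
    rw [h4, Multiset.range_succ, Multiset.range_succ, Multiset.range_succ, Multiset.range_succ,
      Multiset.range_zero]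
    simp only [Multiset.map_cons, Multiset.map_zero]
    show (a ::ₘ (a+2) ::ₘ (a+1) ::ₘ (a+3) ::ₘ 0 : Multiset ℕ) = _
    simp only [← Multiset.singleton_add]
    rw [show a + 3 = a+3 from rfl, show a+2 = a+2 from rfl, show a+1 = a+1 from rfl,
      show a+0 = a by ring]
    abel
  | succ k ih =>
    intro a
    show (↑(a :: (a+2) :: (a+1) :: (a+3) :: e2L k (a+4)) : Multiset ℕ) = _
    simp only [← Multiset.cons_coe]
    rw [ih]
    have h : Multiset.range (4*(k+1)+4)
        = ((List.range 4 ++ (List.range (4*k+4)).map (4 + ·) : List ℕ) : Multiset ℕ) := by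
      rw [show 4*(k+1)+4 = 4+(4*k+4) by ring, Multiset.range, List.range_add]
    rw [h, coe_append, Multiset.map_add]
    have h4 : ((List.range 4 : List ℕ) : Multiset ℕ) = (0 ::ₘ 1 ::ₘ 2 ::ₘ 3 ::ₘ 0) := rfl
    rw [h4]
    have h5 : ((↑((List.range (4*k+4)).map (4 + ·)) : Multiset ℕ))
        = Multiset.map (4 + ·) (Multiset.range (4*k+4)) := Multiset.map_coe _ _
    rw [h5, Multiset.map_map]
    rw [show Multiset.map ((a + ·) ∘ (4 + ·)) (Multiset.range (4*k+4))
        = Multiset.map (a+4 + ·) (Multiset.range (4*k+4)) from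
      Multiset.map_congr rfl (fun i _ => by simp only [Function.comp_apply]; ring)]
    simp only [Multiset.map_cons, Multiset.map_zero]
    rw [show a+0 = a by ring, show a+1 = a+1 from rfl, show a+2 = a+2 from rfl,
      show a+3 = a+3 from rfl]
    simp only [← Multiset.singleton_add]
    abel

lemma e2L_last : ∀ k a, (e2L k a).getLast? = some (a + 4*k+3) := by
  intro k
  induction k with
  | zero => intro a; show [a, a+2, a+1, a+3].getLast? = _; rw [show a + 4*0+3 = a+3 by ring]; rfl
  | succ k ih =>
    intro a
    have hsplit : e2L (k+1) a = [a, a+2, a+1, a+3] ++ e2L k (a+4) := rfl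
    rw [hsplit, List.getLast?_append_of_ne_nil _ (e2L_ne_nil k (a+4)), ih]
    rw [show a+4 + 4*k+3 = a + 4*(k+1)+3 by ring]

/-! ### all columns together -/

lemma bind_colMS (x : ℕ) : ∀ m, (Multiset.range x).bind (fun c => colMS x m c)
    = Multiset.range (m * x) := by
  intro m
  induction m with
  | zero =>
    simp only [colMS_zero, Nat.zero_mul, Multiset.range_zero]
    exact Multiset.bind_zero _
  | succ m ih =>
    simp only [colMS_succ_top]
    simp only [← Multiset.singleton_add]
    rw [Multiset.bind_add, Multiset.bind_singleton, ih]
    have h : Multiset.range ((m+1)*x) = (↑(List.range (m*x) ++ (List.range x).map (m*x + ·)) : Multiset ℕ) := by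
      rw [show (m+1)*x = m*x + x by ring, Multiset.range, List.range_add]
    rw [h, coe_append]
    rw [show (↑((List.range x).map (m*x + ·)) : Multiset ℕ) = Multiset.map (m*x + ·) (Multiset.range x) from (Multiset.map_coe _ _)]
    rw [show (Multiset.map (fun c => c + m*x) (Multiset.range x)) = Multiset.map (m*x + ·) (Multiset.range x) from Multiset.map_congr rfl (fun i _ => Nat.add_comm i (m*x))]
    abel

/-! ### Assembly: family 1 -/

theorem F1_all (x t s : ℕ) (hx2 : x = 2*t+2) :
    (↑(p1L x (2*s+1) t 0 ++ zzL x (2*t) s 0) : Multiset ℕ) = Multiset.range (2*s*x+2*t+1)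
    ∧ linDiffs (p1L x (2*s+1) t 0 ++ zzL x (2*t) s 0)
        = Multiset.replicate (2*t+2*s) 1 + Multiset.replicate (2*t*(2*s)+2*s) x
    ∧ (p1L x (2*s+1) t 0 ++ zzL x (2*t) s 0).head? = some 0
    ∧ (p1L x (2*s+1) t 0 ++ zzL x (2*t) s 0).getLast? = some (2*t + 2*s*x) := by
  obtain ⟨T, hT⟩ := zzL_head x (2*t) s 0
  have h0 : 2*t + 0*x = 0 + 2*t := by ring
  have hl : p1L x (2*s+1) t 0 ++ zzL x (2*t) s 0
      = p1L x (2*s+1) t 0 ++ ((0 + 2*t) :: T) := by rw [hT, h0]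
  refine ⟨?_, ?_, ?_, ?_⟩
  · -- elements
    rw [coe_append, p1L_coe, zzL_coe]
    have hbig := bind_colMS x (2*s+1)
    have hxsplit : Multiset.range x = (2*t+1) ::ₘ (2*t) ::ₘ Multiset.range (2*t) := by
      rw [hx2, show 2*t+2 = (2*t+1)+1 from rfl, Multiset.range_succ, Multiset.range_succ]
    rw [hxsplit, Multiset.cons_bind, Multiset.cons_bind] at hbig
    have htop : colMS x (2*s+1) (2*t+1) = ((2*t+1) + 2*s*x) ::ₘ colMS x (2*s) (2*t+1) := by
      rw [colMS_succ_top, show (2*t+1) + 2*s*x = 2*t+1 + 2*s*x from rfl]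
    rw [htop] at hbig
    -- align arguments
    rw [show 2*t + 0*x = 2*t by ring, show 2*t+1 + 0*x = 2*t+1 by ring]
    rw [show (fun j => colMS x (2*s+1) (0+j)) = (fun j => colMS x (2*s+1) j) from
      funext (fun j => by rw [Nat.zero_add])]
    have hVs : Multiset.range ((2*s+1)*x) = (2*t+1 + 2*s*x) ::ₘ Multiset.range (2*s*x+2*t+1) := by
      rw [show (2*s+1)*x = (2*s*x+2*t+1)+1 from by rw [hx2]; ring, Multiset.range_succ]
      rw [show 2*s*x+2*t+1 = 2*t+1+2*s*x from by ring]
    rw [hVs] at hbig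
    refine (Multiset.cons_inj_right (2*t+1 + 2*s*x)).mp ?_
    rw [← hbig]
    simp only [← Multiset.singleton_add]
    abel
  · -- diffs
    rw [hl, p1L_diffs x (2*s) t 0 T, ← h0, ← hT, zzL_diffs]
    simp only [Multiset.replicate_add]
    abel
  · -- head
    obtain ⟨T', hT'⟩ := p1L_shape x (2*s) t 0 T
    rw [hl, hT']
    rfl
  · -- last
    rw [List.getLast?_append_of_ne_nil _ (zzL_ne_nil x (2*t) s 0), zzL_last]
    rw [show 2*t + (0+2*s)*x = 2*t + 2*s*x by ring]

/-! ### Assembly: family 2, x ≥ 4 -/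

theorem F2_all (x u s : ℕ) (hx2 : x = 2*u+4) :
    (↑(cdL x (2*s+2) 0 ++ (q2L x (2*s+1) 3 u ++ 2 :: yL x 1 s 0)) : Multiset ℕ)
        = Multiset.range (2*s*x + x + 2)
    ∧ linDiffs (cdL x (2*s+2) 0 ++ (q2L x (2*s+1) 3 u ++ 2 :: yL x 1 s 0))
        = Multiset.replicate (2*u+2*s+3) 1 + Multiset.replicate ((2*u+1)*(2*s) + (4*s+2)) x
    ∧ (cdL x (2*s+2) 0 ++ (q2L x (2*s+1) 3 u ++ 2 :: yL x 1 s 0)).head? = some 0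
    ∧ (cdL x (2*s+2) 0 ++ (q2L x (2*s+1) 3 u ++ 2 :: yL x 1 s 0)).getLast?
        = some (2*s*x + x + 1) := by
  obtain ⟨Ty, hTy⟩ := yL_head x 1 s 0
  obtain ⟨Tq, hTq⟩ := q2L_shape x (2*s) 3 u
  have h0x : 0*x = 0 := by ring
  refine ⟨?_, ?_, ?_, ?_⟩
  · -- elements
    rw [coe_append, coe_append, ← Multiset.cons_coe, cdL_coe, q2L_coe, yL_coe]
    have hbig := bind_colMS x (2*s+1)
    have hxsplit : Multiset.range x
        = ((List.range 3 ++ (List.range (2*u+1)).map (3 + ·) : List ℕ) : Multiset ℕ) := by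
      rw [hx2, show 2*u+4 = 3+(2*u+1) by ring, Multiset.range, List.range_add]
    rw [hxsplit] at hbig
    have hxsplit2 : ((List.range 3 ++ (List.range (2*u+1)).map (3 + ·) : List ℕ) : Multiset ℕ)
        = 0 ::ₘ 1 ::ₘ 2 ::ₘ Multiset.map (3 + ·) (Multiset.range (2*u+1)) := by
      rw [coe_append]
      rw [show ((List.range 3 : List ℕ) : Multiset ℕ) = (0 ::ₘ 1 ::ₘ 2 ::ₘ 0) from rfl]
      rw [show ((↑((List.range (2*u+1)).map (3 + ·)) : Multiset ℕ))
          = Multiset.map (3 + ·) (Multiset.range (2*u+1)) from Multiset.map_coe _ _]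
      simp only [← Multiset.singleton_add]
      abel
    rw [hxsplit2, Multiset.cons_bind, Multiset.cons_bind, Multiset.cons_bind,
      Multiset.bind_map] at hbig
    -- split the three special columns
    have hc0 : colMS x (2*s+2) 0 = ((2*s+1)*x) ::ₘ colMS x (2*s+1) 0 := by
      rw [colMS_succ_top]
      congr 1
      omega
    have hc1 : colMS x (2*s+2) (1+0*x) = (1 + (2*s+1)*x) ::ₘ colMS x (2*s+1) 1 := by
      rw [show 1+0*x = 1 from by omega, colMS_succ_top]
    have hc2 : colMS x (2*s+1) 2 = 2 ::ₘ colMS x (2*s) (2+x) := colMS_succ_bot x (2*s) 2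
    rw [hc2] at hbig
    rw [hc0, hc1]
    rw [show colMS x (2*s) (1+1+(0+1)*x) = colMS x (2*s) (2+x) from by
      rw [show 1+1+(0+1)*x = 2+x by ring]]
    have hV2 : Multiset.range (2*s*x + x + 2)
        = (1 + (2*s+1)*x) ::ₘ ((2*s+1)*x) ::ₘ Multiset.range ((2*s+1)*x) := by
      rw [show 2*s*x + x + 2 = ((2*s+1)*x+1)+1 from by ring, Multiset.range_succ,
        Multiset.range_succ]
      rw [show (2*s+1)*x+1 = 1 + (2*s+1)*x by ring]
    rw [hV2, ← hbig]
    simp only [← Multiset.singleton_add]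
    abel
  · -- diffs
    have hy : linDiffs (2 :: yL x 1 s 0)
        = 1 ::ₘ (Multiset.replicate (2*s) 1 + Multiset.replicate (2*s+1) x) := by
      rw [hTy, linDiffs_cons_cons, ← hTy, yL_diffs]
      rw [show diffN 2 (1 + 0*x) = 1 from by unfold diffN; omega]
    have hq := q2L_diffs x (2*s) 3 2 (by norm_num) u (yL x 1 s 0)
    have hqT : q2L x (2*s+1) 3 u ++ 2 :: yL x 1 s 0
        = (3 + 2*u + 2*s*x) :: (Tq ++ 2 :: yL x 1 s 0) := by rw [hTq]; rfl
    rw [hqT, linDiffs_append (cdL x (2*s+2) 0) (3 + 2*u + 2*s*x) _, ← hqT]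
    rw [show cdL x (2*s+2) 0 = cdL x ((2*s+1)+1) 0 from rfl, cdL_diffs, hq, hy]
    have h1 : (2*s+1)*x = 2*s*x + x := by ring
    rw [show diffN (0 + (2*s+1)*x) (3 + 2*u + 2*s*x) = 1 from by unfold diffN; omega]
    rw [show 2*u+2*s+3 = ((2*u+1)+1)+(2*s+1) by ring,
      show (2*u+1)*(2*s) + (4*s+2) = (2*s+1) + ((2*u+1)*(2*s) + (2*s+1)) by ring]
    simp only [Multiset.replicate_add, Multiset.replicate_succ]
    simp only [← Multiset.singleton_add]
    abel
  · -- head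
    rfl
  · -- last
    rw [List.getLast?_append_of_ne_nil _ (by simp : q2L x (2*s+1) 3 u ++ 2 :: yL x 1 s 0 ≠ [])]
    rw [List.getLast?_append_of_ne_nil _ (by simp : (2 :: yL x 1 s 0 : List ℕ) ≠ [])]
    rw [show (2 :: yL x 1 s 0 : List ℕ) = [2] ++ yL x 1 s 0 from rfl,
      List.getLast?_append_of_ne_nil _ (yL_ne_nil x 1 s 0), yL_last]
    rw [show 1 + (0+2*s+1)*x = 2*s*x + x + 1 by ring]


end Stmt13Aux

open Stmt13Aux in
theorem stmt13' (x : ℕ) (hx : 2 ≤ x) (hxe : Even x) (s : ℕ) (hs : 1 ≤ s) :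
    (∃ l : List ℕ,
      (l.Perm (List.range (Multiset.card (Multiset.replicate (x + 2 * s - 2) 1 +
        Multiset.replicate (2 * s * x - 2 * s) x) + 1)) ∧
       linDiffs l = Multiset.replicate (x + 2 * s - 2) 1 +
        Multiset.replicate (2 * s * x - 2 * s) x) ∧ l.head? = some 0 ∧
      l.getLast? = some (Multiset.card (Multiset.replicate (x + 2 * s - 2) 1 +
        Multiset.replicate (2 * s * x - 2 * s) x))) ∧
    (∃ l : List ℕ,
      (l.Perm (List.range (Multiset.card (Multiset.replicate (x + 2 * s - 1) 1 +
        Multiset.replicate (2 * s * x - 2 * s + 2) x) + 1)) ∧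
       linDiffs l = Multiset.replicate (x + 2 * s - 1) 1 +
        Multiset.replicate (2 * s * x - 2 * s + 2) x) ∧ l.head? = some 0 ∧
      l.getLast? = some (Multiset.card (Multiset.replicate (x + 2 * s - 1) 1 +
        Multiset.replicate (2 * s * x - 2 * s + 2) x))) := by
  obtain ⟨m, hm⟩ := hxe
  obtain ⟨t, hx2⟩ : ∃ t, x = 2*t+2 := ⟨m-1, by omega⟩
  have e1 : 2*s*x = 4*(s*t) + 4*s := by rw [hx2]; ring
  constructor
  · -- family 1
    obtain ⟨hcoe, hdiff, hhead, hlast⟩ := F1_all x t s hx2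
    have e2 : 2*t*(2*s) = 4*(s*t) := by ring
    have hcard : Multiset.card (Multiset.replicate (x + 2 * s - 2) 1 +
        Multiset.replicate (2 * s * x - 2 * s) x) = 2*s*x + 2*t := by
      rw [Multiset.card_add, Multiset.card_replicate, Multiset.card_replicate]
      omega
    refine ⟨p1L x (2*s+1) t 0 ++ zzL x (2*t) s 0, ⟨?_, ?_⟩, hhead, ?_⟩
    · refine Multiset.coe_eq_coe.mp ?_
      rw [hcoe, hcard]
      rfl
    · rw [hdiff, show x + 2*s - 2 = 2*t+2*s from by omega,
        show 2*s*x - 2*s = 2*t*(2*s)+2*s from by omega]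
    · rw [hlast, hcard, show 2*t + 2*s*x = 2*s*x + 2*t by ring]
  · -- family 2
    cases t with
    | zero =>
      -- x = 2
      have hx2' : x = 2 := by omega
      subst hx2'
      have hcard : Multiset.card (Multiset.replicate (2 + 2 * s - 1) 1 +
          Multiset.replicate (2 * s * 2 - 2 * s + 2) 2) = 4*s + 3 := by
        rw [Multiset.card_add, Multiset.card_replicate, Multiset.card_replicate]
        omega
      obtain ⟨T, hT⟩ := e2L_head s 0
      refine ⟨e2L s 0, ⟨?_, ?_⟩, ?_, ?_⟩
      · refine Multiset.coe_eq_coe.mp ?_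
        rw [e2L_coe, hcard]
        rw [show (Multiset.range (4*s+4)).map (0 + ·) = Multiset.range (4*s+4) from by simp]
        rfl
      · rw [e2L_diffs, show 2 + 2*s - 1 = 2*s+1 from by omega,
          show 2*s*2 - 2*s + 2 = 2*s+2 from by omega]
      · rw [hT]; rfl
      · rw [e2L_last, hcard, show (0:ℕ) + 4*s+3 = 4*s+3 from by omega]
    | succ u =>
      have hx4 : x = 2*u+4 := by omega
      obtain ⟨hcoe, hdiff, hhead, hlast⟩ := F2_all x u s hx4
      have e3 : (2*u+1)*(2*s) = 4*(s*u) + 2*s := by ring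
      have e4 : 2*s*x = 4*(s*u) + 8*s := by rw [hx4]; ring
      have hcard : Multiset.card (Multiset.replicate (x + 2 * s - 1) 1 +
          Multiset.replicate (2 * s * x - 2 * s + 2) x) = 2*s*x + x + 1 := by
        rw [Multiset.card_add, Multiset.card_replicate, Multiset.card_replicate]
        omega
      refine ⟨cdL x (2*s+2) 0 ++ (q2L x (2*s+1) 3 u ++ 2 :: yL x 1 s 0), ⟨?_, ?_⟩, hhead, ?_⟩
      · refine Multiset.coe_eq_coe.mp ?_
        rw [hcoe, hcard]
        rfl
      · rw [hdiff, show x + 2*s - 1 = 2*u+2*s+3 from by omega,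
          show 2*s*x - 2*s + 2 = (2*u+1)*(2*s) + (4*s+2) from by omega]
      · rw [hlast, hcard]


/-- Let `x ≥ 2` be even. For every `s ≥ 1`, the multisets
`{1^{x+2s-2}, x^{2sx-2s}}` and `{1^{x+2s-1}, x^{2sx-2s+2}}` have perfect linear
realizations. -/
theorem stmt13 (x : ℕ) (hx : 2 ≤ x) (hxe : Even x) (s : ℕ) (hs : 1 ≤ s) :
    HasPerfectLinearRealization
      (Multiset.replicate (x + 2 * s - 2) 1 +
        Multiset.replicate (2 * s * x - 2 * s) x) ∧
    HasPerfectLinearRealization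
      (Multiset.replicate (x + 2 * s - 1) 1 +
        Multiset.replicate (2 * s * x - 2 * s + 2) x) := by
  exact stmt13' x hx hxe s hs
end
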